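/- arXiv:1110.0903 — 5 statements merged into one kernel-verified Lean document; each statement's English description precedes it below -/
import Mathlib

section
/- Let X and Y be finite-dimensional real Banach spaces and let f : X → Y be an ε-isometry for some ε > 0. Then there exist a finite-dimensional real Banach space Z and linear isometries i : X → Z and j : Y → Z such that ‖j ∘ f − i‖ ≤ ε (i.e., ‖j(f x) − i x‖ ≤ ε · ‖x‖ for all x ∈ X). -/
/-- A linear operator `f : X → Y` between real normed spaces is an `ε`-isometry if
`(1+ε)⁻¹ < ‖f x‖ < 1+ε` for every `x` with `‖x‖ = 1`. -/
def IsEpsIsometry (ε : ℝ) {X Y : Type*} [NormedAddCommGroup X] [NormedSpace ℝ X]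
    [NormedAddCommGroup Y] [NormedSpace ℝ Y] (f : X →ₗ[ℝ] Y) : Prop :=
  ∀ x : X, ‖x‖ = 1 → (1 + ε)⁻¹ < ‖f x‖ ∧ ‖f x‖ < 1 + ε

section Aux

variable {X Y : Type} [NormedAddCommGroup X] [NormedSpace ℝ X]
  [NormedAddCommGroup Y] [NormedSpace ℝ Y]

/-- The term whose infimum defines the amalgam norm. -/
noncomputable def aterm (ε : ℝ) (f : X →ₗ[ℝ] Y) (p : X × Y) (u : X) : ℝ :=
  ‖p.1 + u‖ + ‖p.2 - f u‖ + ε * ‖u‖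

/-- The amalgam norm on `X × Y`. -/
noncomputable def aNorm (ε : ℝ) (f : X →ₗ[ℝ] Y) (p : X × Y) : ℝ :=
  ⨅ u : X, aterm ε f p u

variable {ε : ℝ} {f : X →ₗ[ℝ] Y}

lemma f_bounds (hε : 0 < ε) (hf : IsEpsIsometry ε f) (u : X) :
    (1 + ε)⁻¹ * ‖u‖ ≤ ‖f u‖ ∧ ‖f u‖ ≤ (1 + ε) * ‖u‖ := by
  rcases eq_or_ne u 0 with rfl | hu
  · simp
  · have hn : (0:ℝ) < ‖u‖ := norm_pos_iff.mpr hu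
    have h1 : ‖(‖u‖⁻¹ • u : X)‖ = 1 := by
      rw [norm_smul, norm_inv, norm_norm, inv_mul_cancel₀ hn.ne']
    obtain ⟨hlo, hhi⟩ := hf _ h1
    have hfe : ‖f (‖u‖⁻¹ • u)‖ = ‖u‖⁻¹ * ‖f u‖ := by
      rw [map_smul, norm_smul, norm_inv, norm_norm]
    rw [hfe] at hlo hhi
    have hinv : ‖u‖⁻¹ * ‖u‖ = 1 := inv_mul_cancel₀ hn.ne'
    constructor
    · have h2 : (1 + ε)⁻¹ * ‖u‖ ≤ (‖u‖⁻¹ * ‖f u‖) * ‖u‖ := by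
        nlinarith [hlo.le, hn]
      calc (1 + ε)⁻¹ * ‖u‖ ≤ (‖u‖⁻¹ * ‖f u‖) * ‖u‖ := h2
        _ = ‖f u‖ * (‖u‖⁻¹ * ‖u‖) := by ring
        _ = ‖f u‖ := by rw [hinv, mul_one]
    · have h2 : (‖u‖⁻¹ * ‖f u‖) * ‖u‖ ≤ (1 + ε) * ‖u‖ := by
        nlinarith [hhi.le, hn]
      calc ‖f u‖ = (‖u‖⁻¹ * ‖f u‖) * ‖u‖ := by
            rw [mul_comm (‖u‖⁻¹) (‖f u‖), mul_assoc, hinv, mul_one]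
        _ ≤ (1 + ε) * ‖u‖ := h2

lemma aterm_nonneg (hε : 0 < ε) (p : X × Y) (u : X) : 0 ≤ aterm ε f p u := by
  unfold aterm
  positivity

lemma aterm_bddBelow (hε : 0 < ε) (p : X × Y) :
    BddBelow (Set.range (aterm ε f p)) :=
  ⟨0, by rintro _ ⟨u, rfl⟩; exact aterm_nonneg hε p u⟩

lemma aNorm_nonneg (hε : 0 < ε) (p : X × Y) : 0 ≤ aNorm ε f p :=
  le_ciInf fun u => aterm_nonneg hε p u

lemma aNorm_lower_fst (hε : 0 < ε) (p : X × Y) :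
    min ε 1 * ‖p.1‖ ≤ aNorm ε f p := by
  refine le_ciInf fun u => ?_
  unfold aterm
  have h1 : ‖p.1‖ ≤ ‖p.1 + u‖ + ‖u‖ := by
    simpa using norm_add_le (p.1 + u) (-u)
  have h2 : 0 ≤ ‖p.2 - f u‖ := norm_nonneg _
  have h3 : min ε 1 ≤ ε := min_le_left _ _
  have h4 : min ε 1 ≤ 1 := min_le_right _ _
  have h5 : 0 < min ε 1 := lt_min hε one_pos
  nlinarith [norm_nonneg (p.1 + u), norm_nonneg u, norm_nonneg p.1]

lemma aNorm_lower_snd (hε : 0 < ε) (hf : IsEpsIsometry ε f) (p : X × Y) :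
    (ε / (1 + ε)) * ‖p.2‖ ≤ aNorm ε f p := by
  refine le_ciInf fun u => ?_
  unfold aterm
  have hub := (f_bounds hε hf u).2
  have h1 : ‖p.2‖ ≤ ‖p.2 - f u‖ + ‖f u‖ := by
    simpa using norm_add_le (p.2 - f u) (f u)
  have h2 : ‖p.2‖ ≤ ‖p.2 - f u‖ + (1 + ε) * ‖u‖ := by linarith
  have hpos : (0:ℝ) < 1 + ε := by linarith
  have hd : 0 < ε / (1 + ε) := div_pos hε hpos
  have hd1 : ε / (1 + ε) < 1 := (div_lt_one hpos).mpr (by linarith)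
  have key : (ε / (1 + ε)) * ((1 + ε) * ‖u‖) = ε * ‖u‖ := by
    field_simp
  nlinarith [norm_nonneg (p.1 + u), norm_nonneg (p.2 - f u), norm_nonneg u,
    norm_nonneg p.2]

lemma aNorm_zero (hε : 0 < ε) : aNorm ε f 0 = 0 := by
  have h1 : aNorm ε f 0 ≤ aterm ε f 0 0 := ciInf_le (aterm_bddBelow hε 0) 0
  have h2 : aterm ε f (0 : X × Y) 0 = 0 := by
    unfold aterm; simp
  exact le_antisymm (h2 ▸ h1) (aNorm_nonneg hε 0)

lemma aNorm_add_le (hε : 0 < ε) (p q : X × Y) :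
    aNorm ε f (p + q) ≤ aNorm ε f p + aNorm ε f q := by
  refine le_ciInf_add_ciInf fun u v => ?_
  refine le_trans (ciInf_le (aterm_bddBelow hε _) (u + v)) ?_
  unfold aterm
  have h1 : ‖(p + q).1 + (u + v)‖ ≤ ‖p.1 + u‖ + ‖q.1 + v‖ := by
    have : (p + q).1 + (u + v) = (p.1 + u) + (q.1 + v) := by
      simp [Prod.fst_add]; abel
    rw [this]; exact norm_add_le _ _
  have h2 : ‖(p + q).2 - f (u + v)‖ ≤ ‖p.2 - f u‖ + ‖q.2 - f v‖ := by
    have : (p + q).2 - f (u + v) = (p.2 - f u) + (q.2 - f v) := by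
      simp [Prod.snd_add, map_add]; abel
    rw [this]; exact norm_add_le _ _
  have h3 : ε * ‖u + v‖ ≤ ε * ‖u‖ + ε * ‖v‖ := by
    have := norm_add_le u v
    nlinarith
  linarith

lemma aNorm_neg_le (hε : 0 < ε) (p : X × Y) : aNorm ε f (-p) ≤ aNorm ε f p := by
  refine le_ciInf fun u => ?_
  refine le_trans (ciInf_le (aterm_bddBelow hε _) (-u)) ?_
  unfold aterm
  have e1 : ‖(-p).1 + -u‖ = ‖p.1 + u‖ := by
    rw [show (-p).1 + -u = -(p.1 + u) by rw [Prod.fst_neg, neg_add], norm_neg]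
  have e2 : ‖(-p).2 - f (-u)‖ = ‖p.2 - f u‖ := by
    rw [show (-p).2 - f (-u) = -(p.2 - f u) by rw [Prod.snd_neg, map_neg]; abel,
      norm_neg]
  rw [e1, e2, norm_neg]

lemma aNorm_neg (hε : 0 < ε) (p : X × Y) : aNorm ε f (-p) = aNorm ε f p := by
  refine le_antisymm (aNorm_neg_le hε p) ?_
  have := aNorm_neg_le (f := f) hε (-p)
  rwa [neg_neg] at this

lemma aNorm_smul_le (hε : 0 < ε) (c : ℝ) (p : X × Y) :
    aNorm ε f (c • p) ≤ ‖c‖ * aNorm ε f p := by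
  rcases eq_or_ne c 0 with rfl | hc
  · simp [aNorm_zero hε]
  · have hcp : (0:ℝ) < ‖c‖ := norm_pos_iff.mpr hc
    rw [← div_le_iff₀' hcp]
    refine le_ciInf fun u => ?_
    rw [div_le_iff₀' hcp]
    refine le_trans (ciInf_le (aterm_bddBelow hε _) (c • u)) (le_of_eq ?_)
    unfold aterm
    have e1 : ‖(c • p).1 + c • u‖ = ‖c‖ * ‖p.1 + u‖ := by
      rw [show (c • p).1 + c • u = c • (p.1 + u) by simp [smul_add], norm_smul]
    have e2 : ‖(c • p).2 - f (c • u)‖ = ‖c‖ * ‖p.2 - f u‖ := by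
      rw [show (c • p).2 - f (c • u) = c • (p.2 - f u) by
        simp [map_smul, smul_sub], norm_smul]
    have e3 : ε * ‖c • u‖ = ‖c‖ * (ε * ‖u‖) := by
      rw [norm_smul]; ring
    rw [e1, e2, e3]; ring

lemma aNorm_eq_zero (hε : 0 < ε) (hf : IsEpsIsometry ε f) (p : X × Y)
    (h : aNorm ε f p = 0) : p = 0 := by
  have h1 := aNorm_lower_fst (f := f) hε p
  have h2 := aNorm_lower_snd hε hf p
  rw [h] at h1 h2
  have hm : 0 < min ε 1 := lt_min hε one_pos
  have hd : 0 < ε / (1 + ε) := div_pos hε (by linarith)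
  have hx : ‖p.1‖ = 0 := le_antisymm (by nlinarith [norm_nonneg p.1]) (norm_nonneg _)
  have hy : ‖p.2‖ = 0 := le_antisymm (by nlinarith [norm_nonneg p.2]) (norm_nonneg _)
  have : p.1 = 0 := norm_eq_zero.mp hx
  have : p.2 = 0 := norm_eq_zero.mp hy
  exact Prod.ext (norm_eq_zero.mp hx) (norm_eq_zero.mp hy)

lemma aNorm_inl (hε : 0 < ε) (hf : IsEpsIsometry ε f) (x : X) :
    aNorm ε f (x, 0) = ‖x‖ := by
  refine le_antisymm ?_ ?_
  · refine le_trans (ciInf_le (aterm_bddBelow hε _) 0) ?_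
    unfold aterm
    simp
  · refine le_ciInf fun u => ?_
    unfold aterm
    have hlb := (f_bounds hε hf u).1
    have h1 : ‖x‖ ≤ ‖x + u‖ + ‖u‖ := by
      simpa using norm_add_le (x + u) (-u)
    have h2 : ‖(0:Y) - f u‖ = ‖f u‖ := by rw [zero_sub, norm_neg]
    have hpos : (0:ℝ) < 1 + ε := by linarith
    -- (1+ε)⁻¹ + ε ≥ 1  ⟺  1 + ε(1+ε) ≥ 1+ε  ⟺ ε² ≥ 0
    have h3 : (1:ℝ) ≤ (1 + ε)⁻¹ + ε := by
      rw [← sub_nonneg]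
      have : (1 + ε)⁻¹ + ε - 1 = ε ^ 2 / (1 + ε) := by field_simp; ring
      rw [this]
      positivity
    have h4 : (1 + ε)⁻¹ * ‖u‖ + ε * ‖u‖ ≥ ‖u‖ := by nlinarith [norm_nonneg u]
    simp only [h2]
    linarith

lemma aNorm_inr (hε : 0 < ε) (hf : IsEpsIsometry ε f) (y : Y) :
    aNorm ε f (0, y) = ‖y‖ := by
  refine le_antisymm ?_ ?_
  · refine le_trans (ciInf_le (aterm_bddBelow hε _) 0) ?_
    unfold aterm
    simp
  · refine le_ciInf fun u => ?_
    unfold aterm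
    have hub := (f_bounds hε hf u).2
    have h1 : ‖y‖ ≤ ‖y - f u‖ + ‖f u‖ := by
      simpa using norm_add_le (y - f u) (f u)
    have h2 : ‖(0:X) + u‖ = ‖u‖ := by rw [zero_add]
    simp only [h2]
    linarith

lemma aNorm_key (hε : 0 < ε) (x : X) :
    aNorm ε f (-x, f x) ≤ ε * ‖x‖ := by
  refine le_trans (ciInf_le (aterm_bddBelow hε _) x) ?_
  unfold aterm
  simp

end Aux

/-- If `X`, `Y` are finite-dimensional real Banach spaces and `f : X → Y` is an
`ε`-isometry, then there are a finite-dimensional real Banach space `Z` and linear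
isometries `i : X → Z`, `j : Y → Z` with `‖j ∘ f - i‖ ≤ ε`. -/
theorem exists_common_superspace_of_epsIsometry
    {X Y : Type} [NormedAddCommGroup X] [NormedSpace ℝ X] [FiniteDimensional ℝ X]
    [NormedAddCommGroup Y] [NormedSpace ℝ Y] [FiniteDimensional ℝ Y]
    (ε : ℝ) (hε : 0 < ε) (f : X →ₗ[ℝ] Y) (hf : IsEpsIsometry ε f) :
    ∃ (Z : Type) (_ : NormedAddCommGroup Z) (_ : NormedSpace ℝ Z),
      FiniteDimensional ℝ Z ∧
      ∃ (i : X →ₗ[ℝ] Z) (j : Y →ₗ[ℝ] Z),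
        (∀ x : X, ‖i x‖ = ‖x‖) ∧ (∀ y : Y, ‖j y‖ = ‖y‖) ∧
        ∀ x : X, ‖j (f x) - i x‖ ≤ ε * ‖x‖ := by
  classical
  let gn : AddGroupNorm (X × Y) :=
    { toFun := aNorm ε f
      map_zero' := aNorm_zero hε
      add_le' := aNorm_add_le hε
      neg' := aNorm_neg hε
      eq_zero_of_map_eq_zero' := fun p hp => aNorm_eq_zero hε hf p hp }
  letI nacg : NormedAddCommGroup (X × Y) := gn.toNormedAddCommGroup
  letI ns : @NormedSpace ℝ (X × Y) Real.normedField nacg.toSeminormedAddCommGroup :=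
    @NormedSpace.mk ℝ (X × Y) Real.normedField nacg.toSeminormedAddCommGroup
      Prod.instModule (fun c p => aNorm_smul_le hε c p)
  refine ⟨X × Y, nacg, ns, ?_, LinearMap.inl ℝ X Y, LinearMap.inr ℝ X Y, ?_, ?_, ?_⟩
  · exact Module.Finite.prod
  · intro x
    show aNorm ε f (x, 0) = ‖x‖
    exact aNorm_inl hε hf x
  · intro y
    show aNorm ε f (0, y) = ‖y‖
    exact aNorm_inr hε hf y
  · intro x
    show aNorm ε f ((0, f x) - (x, 0)) ≤ ε * ‖x‖
    have : ((0, f x) - (x, 0) : X × Y) = (-x, f x) := by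
      ext <;> simp
    rw [this]
    exact aNorm_key hε x
end

section
/- Let X and Y be finite-dimensional real Banach spaces and let f : X → Y be a bijective ε-isometry for some ε > 0. Then there exists a norm ‖·‖' on the direct sum X ⊕ Y such that ‖(x, 0)‖' = ‖x‖_X for all x ∈ X, ‖(0, y)‖' = ‖y‖_Y for all y ∈ Y, and ‖(−x, f x)‖' ≤ ε for every x ∈ X with ‖x‖_X = 1. -/
/-- If `f : X → Y` is a bijective `ε`-isometry between finite-dimensional real Banach
spaces, there is a norm `N` on `X ⊕ Y` restricting to the given norms on `X` and `Y`
such that `N (-x, f x) ≤ ε` whenever `‖x‖ = 1`. -/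
theorem exists_norm_on_prod_of_bijective_epsIsometry
    {X Y : Type} [NormedAddCommGroup X] [NormedSpace ℝ X] [FiniteDimensional ℝ X]
    [NormedAddCommGroup Y] [NormedSpace ℝ Y] [FiniteDimensional ℝ Y]
    (ε : ℝ) (hε : 0 < ε) (f : X →ₗ[ℝ] Y) (hf : IsEpsIsometry ε f)
    (hbij : Function.Bijective f) :
    ∃ N : X × Y → ℝ,
      (∀ u : X × Y, N u = 0 ↔ u = 0) ∧
      (∀ (a : ℝ) (u : X × Y), N (a • u) = |a| * N u) ∧
      (∀ u v : X × Y, N (u + v) ≤ N u + N v) ∧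
      (∀ x : X, N (x, 0) = ‖x‖) ∧
      (∀ y : Y, N (0, y) = ‖y‖) ∧
      (∀ x : X, ‖x‖ = 1 → N (-x, f x) ≤ ε) := by
  classical
  have hε1 : (0:ℝ) < 1 + ε := by linarith
  -- homogeneous bounds on f
  have hub : ∀ z : X, ‖f z‖ ≤ (1 + ε) * ‖z‖ := by
    intro z
    rcases eq_or_ne z 0 with rfl | hz
    · simp
    · have hz' : ‖z‖ ≠ 0 := norm_ne_zero_iff.mpr hz
      have hzpos : (0:ℝ) < ‖z‖ := norm_pos_iff.mpr hz
      have h1 : ‖(‖z‖⁻¹ • z)‖ = 1 := by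
        rw [norm_smul, norm_inv, norm_norm, inv_mul_cancel₀ hz']
      have h2 := (hf _ h1).2
      rw [map_smul, norm_smul, norm_inv, norm_norm] at h2
      have h3 : ‖z‖ * (‖z‖⁻¹ * ‖f z‖) ≤ ‖z‖ * (1 + ε) :=
        le_of_lt (mul_lt_mul_of_pos_left h2 hzpos)
      rw [← mul_assoc, mul_inv_cancel₀ hz', one_mul] at h3
      linarith [h3]
  have hlb : ∀ z : X, (1 + ε)⁻¹ * ‖z‖ ≤ ‖f z‖ := by
    intro z
    rcases eq_or_ne z 0 with rfl | hz
    · simp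
    · have hz' : ‖z‖ ≠ 0 := norm_ne_zero_iff.mpr hz
      have hzpos : (0:ℝ) < ‖z‖ := norm_pos_iff.mpr hz
      have h1 : ‖(‖z‖⁻¹ • z)‖ = 1 := by
        rw [norm_smul, norm_inv, norm_norm, inv_mul_cancel₀ hz']
      have h2 := (hf _ h1).1
      rw [map_smul, norm_smul, norm_inv, norm_norm] at h2
      have h3 : ‖z‖ * (1 + ε)⁻¹ ≤ ‖z‖ * (‖z‖⁻¹ * ‖f z‖) :=
        le_of_lt (mul_lt_mul_of_pos_left h2 hzpos)
      rw [← mul_assoc, mul_inv_cancel₀ hz', one_mul] at h3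
      linarith [h3]
  -- the candidate norm
  set g : X × Y → X → ℝ := fun u z => ‖u.1 + z‖ + ‖u.2 - f z‖ + ε * ‖z‖ with hg
  have hg_nonneg : ∀ u z, 0 ≤ g u z := by
    intro u z
    simp only [hg]
    positivity
  -- strong lower bound
  have hglb : ∀ u z, ε / (ε + 2) * (‖u.1‖ + ‖u.2‖) ≤ g u z := by
    intro u z
    have h1 : ‖u.1‖ - ‖z‖ ≤ ‖u.1 + z‖ := by
      have := norm_add_le (u.1 + z) (-z)
      simp at this
      have h' := norm_le_norm_add_norm_sub' u.1 (-z)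
      calc ‖u.1‖ - ‖z‖ ≤ ‖u.1 + z‖ + ‖z‖ - ‖z‖ := by
            have := norm_sub_norm_le (u.1 + z) z
            have h'' : ‖u.1 + z - z‖ = ‖u.1‖ := by simp
            linarith [norm_add_le (u.1 + z) (-z)]
          _ = ‖u.1 + z‖ := by ring
    have h2 : ‖u.2‖ - (1 + ε) * ‖z‖ ≤ ‖u.2 - f z‖ := by
      have := norm_sub_norm_le u.2 (u.2 - f z)
      have h'' : ‖u.2 - (u.2 - f z)‖ = ‖f z‖ := by simp
      have := hub z
      have := norm_sub_norm_le u.2 (f z)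
      linarith [abs_norm_sub_norm_le u.2 (f z), hub z,
        norm_sub_norm_le u.2 (f z)]
    have h3 : ε * ‖z‖ ≤ g u z := by
      have := norm_nonneg (u.1 + z)
      have := norm_nonneg (u.2 - f z)
      simp only [hg]
      nlinarith
    have h4 : ‖u.1‖ + ‖u.2‖ - 2 * ‖z‖ ≤ g u z := by
      simp only [hg]
      nlinarith [norm_nonneg z]
    have hden : (0:ℝ) < ε + 2 := by linarith
    rw [div_mul_eq_mul_div, div_le_iff₀ hden]
    have p1 := mul_le_mul_of_nonneg_left h4 hε.le
    have p2 := mul_le_mul_of_nonneg_left h3 (by norm_num : (0:ℝ) ≤ 2)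
    nlinarith [p1, p2]
  set N : X × Y → ℝ := fun u => ⨅ z : X, g u z with hN
  have hbdd : ∀ u, BddBelow (Set.range (g u)) := fun u =>
    ⟨0, by rintro _ ⟨z, rfl⟩; exact hg_nonneg u z⟩
  have hNle : ∀ u z, N u ≤ g u z := fun u z => ciInf_le (hbdd u) z
  have hNlb : ∀ u, ε / (ε + 2) * (‖u.1‖ + ‖u.2‖) ≤ N u :=
    fun u => le_ciInf (hglb u)
  have hNnonneg : ∀ u, 0 ≤ N u := fun u => le_ciInf (hg_nonneg u)
  -- value on X
  have hX : ∀ x : X, N (x, 0) = ‖x‖ := by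
    intro x
    apply le_antisymm
    · have := hNle (x, 0) 0
      simpa [hg] using this
    · refine le_ciInf fun z => ?_
      have h1 : ‖x‖ - ‖z‖ ≤ ‖x + z‖ := by
        have := norm_add_le (x + z) (-z)
        simp at this
        linarith
      have h2 := hlb z
      have hinv : (1:ℝ) - ε ≤ (1 + ε)⁻¹ := by
        rw [inv_eq_one_div, le_div_iff₀ hε1]
        nlinarith
      have hznn := norm_nonneg z
      have h5 : (1 - ε) * ‖z‖ ≤ (1 + ε)⁻¹ * ‖z‖ :=
        mul_le_mul_of_nonneg_right hinv hznn
      simp only [hg]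
      simp only [zero_sub, norm_neg]
      -- ‖x‖ ≤ ‖x+z‖ + ‖f z‖ + ε‖z‖
      nlinarith [h2, h1, h5]
  have hY : ∀ y : Y, N (0, y) = ‖y‖ := by
    intro y
    apply le_antisymm
    · have := hNle (0, y) 0
      simpa [hg] using this
    · refine le_ciInf fun z => ?_
      have h2 : ‖y‖ - (1 + ε) * ‖z‖ ≤ ‖y - f z‖ := by
        have := norm_sub_norm_le y (f z)
        linarith [hub z]
      simp only [hg]
      simp only [zero_add]
      linarith [h2, norm_nonneg z]
  -- scaling with nonzero scalar, one inequality
  have hscale : ∀ (a : ℝ), a ≠ 0 → ∀ u, N (a • u) ≤ |a| * N u := by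
    intro a ha u
    have hapos : (0:ℝ) < |a| := abs_pos.mpr ha
    rw [Real.mul_iInf_of_nonneg (le_of_lt hapos)]
    refine le_ciInf fun z => ?_
    have key : g (a • u) (a • z) = |a| * g u z := by
      simp only [hg, Prod.smul_fst, Prod.smul_snd, map_smul]
      rw [← smul_add, ← smul_sub, norm_smul, norm_smul, norm_smul]
      simp only [Real.norm_eq_abs]
      ring
    calc N (a • u) ≤ g (a • u) (a • z) := hNle _ _
      _ = |a| * g u z := key
  have hhomog : ∀ (a : ℝ) (u : X × Y), N (a • u) = |a| * N u := by
    intro a u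
    rcases eq_or_ne a 0 with rfl | ha
    · simp only [zero_smul, abs_zero, zero_mul]
      apply le_antisymm
      · have := hNle 0 0
        simpa [hg] using this
      · exact hNnonneg 0
    · refine le_antisymm (hscale a ha u) ?_
      have h2 := hscale a⁻¹ (inv_ne_zero ha) (a • u)
      rw [inv_smul_smul₀ ha, abs_inv] at h2
      have hapos : (0:ℝ) < |a| := abs_pos.mpr ha
      calc |a| * N u ≤ |a| * (|a|⁻¹ * N (a • u)) :=
            mul_le_mul_of_nonneg_left h2 hapos.le
        _ = N (a • u) := by
            rw [← mul_assoc, mul_inv_cancel₀ (ne_of_gt hapos), one_mul]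
  -- triangle inequality
  have htri : ∀ u v, N (u + v) ≤ N u + N v := by
    intro u v
    refine le_ciInf_add_ciInf fun z w => ?_
    calc N (u + v) ≤ g (u + v) (z + w) := hNle _ _
      _ ≤ g u z + g v w := by
          simp only [hg, Prod.fst_add, Prod.snd_add, map_add]
          have h1 : ‖u.1 + v.1 + (z + w)‖ ≤ ‖u.1 + z‖ + ‖v.1 + w‖ := by
            have := norm_add_le (u.1 + z) (v.1 + w)
            calc ‖u.1 + v.1 + (z + w)‖ = ‖(u.1 + z) + (v.1 + w)‖ := by
                  congr 1; abel
              _ ≤ ‖u.1 + z‖ + ‖v.1 + w‖ := norm_add_le _ _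
          have h2 : ‖u.2 + v.2 - (f z + f w)‖ ≤ ‖u.2 - f z‖ + ‖v.2 - f w‖ := by
            calc ‖u.2 + v.2 - (f z + f w)‖ = ‖(u.2 - f z) + (v.2 - f w)‖ := by
                  congr 1; abel
              _ ≤ ‖u.2 - f z‖ + ‖v.2 - f w‖ := norm_add_le _ _
          have h3 : ‖z + w‖ ≤ ‖z‖ + ‖w‖ := norm_add_le z w
          nlinarith [h1, h2, h3]
  -- definiteness
  have hdef : ∀ u : X × Y, N u = 0 ↔ u = 0 := by
    intro u
    constructor
    · intro h
      have := hNlb u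
      rw [h] at this
      have hc : (0:ℝ) < ε / (ε + 2) := div_pos hε (by linarith)
      have h1 : ‖u.1‖ + ‖u.2‖ ≤ 0 := by nlinarith [norm_nonneg u.1, norm_nonneg u.2]
      have h2 : u.1 = 0 := norm_eq_zero.mp (le_antisymm (by nlinarith [norm_nonneg u.2]) (norm_nonneg u.1))
      have h3 : u.2 = 0 := norm_eq_zero.mp (le_antisymm (by nlinarith [norm_nonneg u.1]) (norm_nonneg u.2))
      exact Prod.ext h2 h3
    · rintro rfl
      apply le_antisymm
      · have := hNle 0 0
        simpa [hg] using this
      · exact hNnonneg 0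
  -- the ε bound
  have hepsb : ∀ x : X, ‖x‖ = 1 → N (-x, f x) ≤ ε := by
    intro x hx
    have := hNle (-x, f x) x
    simp only [hg] at this
    simp only [neg_add_cancel, norm_zero, sub_self, zero_add, hx, mul_one] at this
    simpa using this
  exact ⟨N, hdef, hhomog, htri, hX, hY, hepsb⟩
end

section
/- Let E be a Gurariĭ space, let X be a finite-dimensional linear subspace of E, let Y be a finite-dimensional real Banach space, and let f : X → Y be an ε-isometry for some ε > 0. Then for every δ > 0 there exists a δ-isometry g : Y → E such that ‖g ∘ f − id_X‖ < ε (i.e., ‖g(f x) − x‖ < ε · ‖x‖ for all nonzero x ∈ X). -/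
/-- A Gurariĭ space: a separable real Banach space `G` such that for all
finite-dimensional Banach spaces `X ⊆ Y`, every `ε > 0` and every linear isometry
`f : X → G`, there is an injective linear operator `g : Y → G` extending `f` with
`‖g‖ ⬝ ‖g⁻¹‖ < 1 + ε` (expressed via constants `M`, `N` bounding `g` above and below). -/
def IsGurarii (G : Type*) [NormedAddCommGroup G] [NormedSpace ℝ G] : Prop :=
  CompleteSpace G ∧ TopologicalSpace.SeparableSpace G ∧
  ∀ (Y : Type) [NormedAddCommGroup Y] [NormedSpace ℝ Y] [FiniteDimensional ℝ Y]
    (X : Submodule ℝ Y) (ε : ℝ), 0 < ε →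
    ∀ f : X →ₗ[ℝ] G, (∀ x : X, ‖f x‖ = ‖x‖) →
      ∃ g : Y →ₗ[ℝ] G, Function.Injective g ∧ (∀ x : X, g x = f x) ∧
        ∃ M N : ℝ, (∀ y : Y, ‖g y‖ ≤ M * ‖y‖) ∧ (∀ y : Y, ‖y‖ ≤ N * ‖g y‖) ∧
          M * N < 1 + ε

noncomputable section GlueAux

variable {X Y : Type} [NormedAddCommGroup X] [NormedSpace ℝ X]
  [NormedAddCommGroup Y] [NormedSpace ℝ Y]

/-- The functional whose infimum defines the glue norm. -/
def glueT (f : X →ₗ[ℝ] Y) (e : ℝ) (p : X × Y) (u : X) : ℝ :=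
  ‖p.1 - u‖ + ‖p.2 + f u‖ + e * ‖u‖

/-- The glue norm. -/
def glueN (f : X →ₗ[ℝ] Y) (e : ℝ) (p : X × Y) : ℝ :=
  sInf (Set.range (glueT f e p))

variable {f : X →ₗ[ℝ] Y} {e : ℝ}

lemma glueT_nonneg (he : 0 < e) (p : X × Y) (u : X) : 0 ≤ glueT f e p u := by
  have h1 := norm_nonneg (p.1 - u); have h2 := norm_nonneg (p.2 + f u)
  have h3 : 0 ≤ e * ‖u‖ := by positivity
  unfold glueT; linarith

lemma glueN_le (he : 0 < e) (p : X × Y) (u : X) : glueN f e p ≤ glueT f e p u :=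
  csInf_le ⟨0, by rintro x ⟨v, rfl⟩; exact glueT_nonneg he p v⟩ ⟨u, rfl⟩

lemma le_glueN (p : X × Y) {c : ℝ} (h : ∀ u, c ≤ glueT f e p u) : c ≤ glueN f e p :=
  le_csInf (Set.range_nonempty _) (by rintro x ⟨v, rfl⟩; exact h v)

lemma glueN_nonneg (he : 0 < e) (p : X × Y) : 0 ≤ glueN f e p :=
  le_glueN p fun u => glueT_nonneg he p u

lemma glueN_zero (he : 0 < e) : glueN f e (0 : X × Y) = 0 :=
  le_antisymm (by simpa [glueT] using glueN_le (f := f) he 0 0) (glueN_nonneg he 0)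

lemma glueN_add_le (he : 0 < e) (p q : X × Y) :
    glueN f e (p + q) ≤ glueN f e p + glueN f e q := by
  have key : ∀ u v : X, glueN f e (p + q) ≤ glueT f e p u + glueT f e q v := by
    intro u v
    refine (glueN_le he (p + q) (u + v)).trans ?_
    unfold glueT
    have h1 : ‖(p + q).1 - (u + v)‖ ≤ ‖p.1 - u‖ + ‖q.1 - v‖ := by
      have h : (p + q).1 - (u + v) = (p.1 - u) + (q.1 - v) := by
        simp [Prod.fst_add]; abel
      rw [h]; exact norm_add_le _ _
    have h2 : ‖(p + q).2 + f (u + v)‖ ≤ ‖p.2 + f u‖ + ‖q.2 + f v‖ := by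
      have h : (p + q).2 + f (u + v) = (p.2 + f u) + (q.2 + f v) := by
        simp [Prod.snd_add, map_add]; abel
      rw [h]; exact norm_add_le _ _
    have h3 : e * ‖u + v‖ ≤ e * ‖u‖ + e * ‖v‖ := by
      rw [← mul_add]; exact mul_le_mul_of_nonneg_left (norm_add_le _ _) he.le
    linarith
  rw [← sub_le_iff_le_add']
  refine le_glueN q fun v => ?_
  rw [sub_le_iff_le_add', ← sub_le_iff_le_add]
  refine le_glueN p fun u => ?_
  rw [sub_le_iff_le_add]
  linarith [key u v]

lemma glueT_neg (p : X × Y) (u : X) : glueT f e (-p) (-u) = glueT f e p u := by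
  unfold glueT
  rw [show (-p).1 - -u = -(p.1 - u) by simp; abel, show (-p).2 + f (-u) = -(p.2 + f u) by
    simp [map_neg]; abel, norm_neg, norm_neg, norm_neg]

lemma glueN_neg (he : 0 < e) (p : X × Y) : glueN f e (-p) = glueN f e p := by
  have key : ∀ q : X × Y, glueN f e (-q) ≤ glueN f e q := by
    intro q
    refine le_glueN q fun u => ?_
    calc glueN f e (-q) ≤ glueT f e (-q) (-u) := glueN_le he _ _
      _ = glueT f e q u := glueT_neg q u
  refine le_antisymm (key p) ?_
  simpa using key (-p)

lemma glueN_fst_le (he : 0 < e) (p : X × Y) :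
    e / (1 + e) * ‖p.1‖ ≤ glueN f e p := by
  refine le_glueN p fun u => ?_
  unfold glueT
  have h1 : ‖p.1‖ ≤ ‖p.1 - u‖ + ‖u‖ := by
    simpa using norm_add_le (p.1 - u) u
  have h2 : (0:ℝ) ≤ ‖p.2 + f u‖ := norm_nonneg _
  have h3 : (0:ℝ) ≤ ‖u‖ := norm_nonneg _
  have h4 : (0:ℝ) ≤ ‖p.1 - u‖ := norm_nonneg _
  rw [div_mul_eq_mul_div, div_le_iff₀ (by linarith)]
  nlinarith [mul_le_mul_of_nonneg_left h1 he.le, mul_nonneg (mul_nonneg he.le he.le) h3,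
    mul_nonneg he.le h2, mul_nonneg he.le h4]

lemma glueN_snd_le (he : 0 < e) (hu : ∀ u : X, ‖f u‖ ≤ (1 + e) * ‖u‖) (p : X × Y) :
    e / (1 + 2 * e) * ‖p.2‖ ≤ glueN f e p := by
  refine le_glueN p fun u => ?_
  unfold glueT
  have h1 : ‖p.2‖ ≤ ‖p.2 + f u‖ + (1 + e) * ‖u‖ := by
    calc ‖p.2‖ ≤ ‖p.2 + f u‖ + ‖f u‖ := by
          calc ‖p.2‖ = ‖(p.2 + f u) - f u‖ := by rw [add_sub_cancel_right]
            _ ≤ ‖p.2 + f u‖ + ‖f u‖ := norm_sub_le _ _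
      _ ≤ ‖p.2 + f u‖ + (1 + e) * ‖u‖ := by linarith [hu u]
  have h2 : (0:ℝ) ≤ ‖p.2 + f u‖ := norm_nonneg _
  have h3 : (0:ℝ) ≤ ‖u‖ := norm_nonneg _
  have h4 : (0:ℝ) ≤ ‖p.1 - u‖ := norm_nonneg _
  rw [div_mul_eq_mul_div, div_le_iff₀ (by linarith)]
  nlinarith [mul_le_mul_of_nonneg_left h1 he.le, mul_nonneg (mul_nonneg he.le he.le) h3,
    mul_nonneg he.le h2, mul_nonneg he.le h4]

lemma glueT_smul (c : ℝ) (p : X × Y) (u : X) :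
    glueT f e (c • p) (c • u) = |c| * glueT f e p u := by
  unfold glueT
  rw [show (c • p).1 - c • u = c • (p.1 - u) by simp [smul_sub],
    show (c • p).2 + f (c • u) = c • (p.2 + f u) by simp [map_smul, smul_add],
    norm_smul, norm_smul, norm_smul, Real.norm_eq_abs]
  ring

lemma glueN_smul_le (he : 0 < e) (c : ℝ) (p : X × Y) :
    glueN f e (c • p) ≤ |c| * glueN f e p := by
  rcases eq_or_ne c 0 with rfl | hc
  · simp [glueN_zero he]
  · have hc' : 0 < |c| := abs_pos.mpr hc
    rw [← inv_mul_le_iff₀ hc']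
    refine le_glueN p fun u => ?_
    rw [inv_mul_le_iff₀ hc', ← glueT_smul]
    exact glueN_le he _ _

lemma glueN_inl (he : 0 < e) (hl : ∀ u : X, ‖u‖ ≤ (1 + e) * ‖f u‖) (x : X) :
    glueN f e ((x, 0) : X × Y) = ‖x‖ := by
  refine le_antisymm ?_ ?_
  · simpa [glueT] using glueN_le (f := f) he (x, (0 : Y)) 0
  · refine le_glueN _ fun u => ?_
    unfold glueT
    simp only
    have h1 : ‖x‖ ≤ ‖x - u‖ + ‖u‖ := by simpa using norm_add_le (x - u) u
    have h2 : ‖u‖ ≤ (1 + e) * ‖(0 : Y) + f u‖ := by simpa using hl u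
    have h3 : (0:ℝ) ≤ ‖u‖ := norm_nonneg _
    have h4 : (0:ℝ) ≤ ‖x - u‖ := norm_nonneg _
    have h5 : (0:ℝ) ≤ ‖(0 : Y) + f u‖ := norm_nonneg _
    nlinarith [mul_nonneg (mul_nonneg he.le he.le) h3, mul_nonneg he.le h5,
      mul_nonneg he.le h4]

lemma glueN_inr (he : 0 < e) (hu : ∀ u : X, ‖f u‖ ≤ (1 + e) * ‖u‖) (y : Y) :
    glueN f e ((0, y) : X × Y) = ‖y‖ := by
  refine le_antisymm ?_ ?_
  · simpa [glueT] using glueN_le (f := f) he ((0 : X), y) 0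
  · refine le_glueN _ fun u => ?_
    unfold glueT
    simp only
    have h1 : ‖y‖ ≤ ‖y + f u‖ + (1 + e) * ‖u‖ := by
      calc ‖y‖ = ‖(y + f u) - f u‖ := by rw [add_sub_cancel_right]
        _ ≤ ‖y + f u‖ + ‖f u‖ := norm_sub_le _ _
        _ ≤ ‖y + f u‖ + (1 + e) * ‖u‖ := by linarith [hu u]
    have h2 : ‖(0 : X) - u‖ = ‖u‖ := by simp
    rw [h2]
    linarith [norm_nonneg u]

lemma glueN_cross (he : 0 < e) (x : X) :
    glueN f e ((-x, f x) : X × Y) ≤ e * ‖x‖ := by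
  have := glueN_le (f := f) he ((-x, f x) : X × Y) (-x)
  simpa [glueT, map_neg] using this

/-- Type synonym carrying the glue norm. -/
def Glue (f : X →ₗ[ℝ] Y) (e : ℝ) (_he : 0 < e)
    (_hl : ∀ u : X, ‖u‖ ≤ (1 + e) * ‖f u‖)
    (_hu : ∀ u : X, ‖f u‖ ≤ (1 + e) * ‖u‖) : Type := X × Y

namespace Glue

variable {he : 0 < e} {hl : ∀ u : X, ‖u‖ ≤ (1 + e) * ‖f u‖}
  {hu : ∀ u : X, ‖f u‖ ≤ (1 + e) * ‖u‖}

instance : AddCommGroup (Glue f e he hl hu) := inferInstanceAs (AddCommGroup (X × Y))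
instance : Module ℝ (Glue f e he hl hu) := inferInstanceAs (Module ℝ (X × Y))

instance : NormedAddCommGroup (Glue f e he hl hu) :=
  AddGroupNorm.toNormedAddCommGroup
    { toFun := fun p => glueN f e p
      map_zero' := glueN_zero he
      add_le' := glueN_add_le he
      neg' := glueN_neg he
      eq_zero_of_map_eq_zero' := by
        intro p hp
        have h1 := glueN_fst_le (f := f) he p
        have h2 := glueN_snd_le (f := f) he hu p
        replace hp : glueN f e p = 0 := hp
        rw [hp] at h1 h2
        have hc1 : 0 < e / (1 + e) := by positivity
        have hc2 : 0 < e / (1 + 2 * e) := by positivity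
        have hx : ‖p.1‖ = 0 := le_antisymm (by nlinarith [norm_nonneg p.1]) (norm_nonneg _)
        have hy : ‖p.2‖ = 0 := le_antisymm (by nlinarith [norm_nonneg p.2]) (norm_nonneg _)
        have : p.1 = 0 := norm_eq_zero.mp hx
        have : p.2 = 0 := norm_eq_zero.mp hy
        exact Prod.ext ‹p.1 = 0› ‹p.2 = 0› }

instance : NormedSpace ℝ (Glue f e he hl hu) :=
  ⟨fun c p => by
    rw [Real.norm_eq_abs]; exact glueN_smul_le (f := f) he c p⟩

lemma norm_def (p : Glue f e he hl hu) : ‖p‖ = glueN f e p := rfl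

instance [FiniteDimensional ℝ X] [FiniteDimensional ℝ Y] :
    FiniteDimensional ℝ (Glue f e he hl hu) :=
  inferInstanceAs (FiniteDimensional ℝ (X × Y))

variable (f e he hl hu)

/-- Embedding of `X`. -/
def inl : X →ₗ[ℝ] Glue f e he hl hu where
  toFun x := ((x, 0) : X × Y)
  map_add' a b := by
    show ((a + b, 0) : X × Y) = (a, 0) + (b, 0)
    exact Prod.ext rfl (add_zero (0:Y)).symm
  map_smul' c a := by
    show ((c • a, 0) : X × Y) = c • ((a, 0) : X × Y)
    simp

/-- Embedding of `Y`. -/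
def inr : Y →ₗ[ℝ] Glue f e he hl hu where
  toFun y := ((0, y) : X × Y)
  map_add' a b := by
    show ((0, a + b) : X × Y) = (0, a) + (0, b)
    exact Prod.ext (add_zero (0:X)).symm rfl
  map_smul' c a := by
    show ((0, c • a) : X × Y) = c • ((0, a) : X × Y)
    simp

lemma norm_inl (x : X) : ‖inl f e he hl hu x‖ = ‖x‖ := glueN_inl he hl x

lemma norm_inr (y : Y) : ‖inr f e he hl hu y‖ = ‖y‖ := glueN_inr he hu y

lemma inl_injective : Function.Injective (inl f e he hl hu) := by
  intro a b hab
  have : ((a, 0) : X × Y) = (b, 0) := hab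
  exact (Prod.ext_iff.mp this).1

lemma norm_inr_sub_inl (x : X) :
    ‖inr f e he hl hu (f x) - inl f e he hl hu x‖ ≤ e * ‖x‖ := by
  have h : inr f e he hl hu (f x) - inl f e he hl hu x = ((-x, f x) : X × Y) := by
    show ((0, f x) : X × Y) - (x, 0) = (-x, f x)
    exact Prod.ext (zero_sub x) (sub_zero (f x))
  rw [norm_def, h]
  exact glueN_cross he x

end Glue

end GlueAux

set_option maxHeartbeats 4000000 in
/-- If `E` is a Gurariĭ space, `X ⊆ E` a finite-dimensional subspace, `Y` a
finite-dimensional real Banach space and `f : X → Y` an `ε`-isometry, then for each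
`δ > 0` there is a `δ`-isometry `g : Y → E` with `‖g ∘ f - id_X‖ < ε`. -/
theorem exists_epsIsometry_almost_inverse
    {E : Type} [NormedAddCommGroup E] [NormedSpace ℝ E] (hE : IsGurarii E)
    {Y : Type} [NormedAddCommGroup Y] [NormedSpace ℝ Y] [FiniteDimensional ℝ Y]
    (X : Submodule ℝ E) (hX : FiniteDimensional ℝ X)
    (ε : ℝ) (hε : 0 < ε) (f : X →ₗ[ℝ] Y) (hf : IsEpsIsometry ε f) :
    ∀ δ : ℝ, 0 < δ →
      ∃ g : Y →ₗ[ℝ] E, IsEpsIsometry δ g ∧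
        ∀ x : X, x ≠ 0 → ‖g (f x) - (x : E)‖ < ε * ‖x‖ := by
  intro δ hδ
  haveI := hX
  by_cases hX0 : ∀ x : X, x = 0
  · -- trivial domain: only need a δ-isometry Y → E
    by_cases hY0 : ∀ y : Y, y = 0
    · refine ⟨0, ?_, ?_⟩
      · intro y hy
        rw [hY0 y, norm_zero] at hy
        norm_num at hy
      · intro x hx; exact absurd (hX0 x) hx
    · push_neg at hY0
      obtain ⟨y₁, hy₁⟩ := hY0
      have hy₁n : (0:ℝ) < ‖y₁‖ := norm_pos_iff.mpr hy₁
      set y₀ := ‖y₁‖⁻¹ • y₁ with hy₀def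
      have hy₀ : ‖y₀‖ = 1 := by
        rw [hy₀def, norm_smul, Real.norm_eq_abs, abs_inv, abs_of_pos hy₁n,
          inv_mul_cancel₀ hy₁n.ne']
      obtain ⟨g₀, -, -, M, N, hM, hN, hMN⟩ :=
        hE.2.2 Y ⊥ δ hδ 0 (fun x => by
          have hx : (x : Y) = 0 := x.2
          simp only [LinearMap.zero_apply, norm_zero]
          rw [show ‖x‖ = ‖(x : Y)‖ from rfl, hx, norm_zero])
      set c := ‖g₀ y₀‖ with hcdef
      have hcM : c ≤ M := by simpa [hy₀] using hM y₀
      have hNc : 1 ≤ N * c := by simpa [hy₀] using hN y₀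
      have hcnn : (0:ℝ) ≤ c := norm_nonneg _
      have hc0 : 0 < c := by
        rcases (hcnn.eq_or_lt).imp Eq.symm id with h | h
        · rw [h, mul_zero] at hNc; norm_num at hNc
        · exact h
      have hN0 : 0 < N := by nlinarith
      have hM0 : 0 < M := lt_of_lt_of_le hc0 hcM
      refine ⟨c⁻¹ • g₀, ?_, fun x hx => absurd (hX0 x) hx⟩
      intro y hy
      have hnorm : ‖(c⁻¹ • g₀) y‖ = c⁻¹ * ‖g₀ y‖ := by
        rw [LinearMap.smul_apply, norm_smul, Real.norm_eq_abs, abs_inv, abs_of_pos hc0]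
      set t := ‖g₀ y‖ with htdef
      have htM : t ≤ M := by simpa [hy] using hM y
      have hNt : 1 ≤ N * t := by simpa [hy] using hN y
      have ht0 : 0 < t := by nlinarith
      rw [hnorm]
      constructor
      · rw [lt_inv_mul_iff₀ hc0, mul_comm, inv_mul_lt_iff₀ (by linarith : (0:ℝ) < 1 + δ)]
        nlinarith [mul_le_mul_of_nonneg_left hNt hM0.le, mul_lt_mul_of_pos_right hMN ht0]
      · rw [inv_mul_lt_iff₀ hc0]
        nlinarith [mul_le_mul_of_nonneg_left hNc hM0.le, mul_lt_mul_of_pos_right hMN hc0]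
  · push_neg at hX0
    obtain ⟨x₁, hx₁⟩ := hX0
    have hx₁n : (0:ℝ) < ‖x₁‖ := norm_pos_iff.mpr hx₁
    set x₀ := ‖x₁‖⁻¹ • x₁ with hx₀def
    have hx₀ : ‖x₀‖ = 1 := by
      rw [hx₀def, norm_smul, Real.norm_eq_abs, abs_inv, abs_of_pos hx₁n,
        inv_mul_cancel₀ hx₁n.ne']
    -- compactness: attained min and max of ‖f ·‖ on the unit sphere
    have hS : IsCompact (Metric.sphere (0 : X) 1) := isCompact_sphere 0 1
    have hSne : (Metric.sphere (0 : X) 1).Nonempty :=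
      ⟨x₀, mem_sphere_zero_iff_norm.mpr hx₀⟩
    have hcont : ContinuousOn (fun x : X => ‖f x‖) (Metric.sphere (0 : X) 1) :=
      (f.continuous_of_finiteDimensional.norm).continuousOn
    obtain ⟨xa, hxaS, hxa⟩ := hS.exists_isMinOn hSne hcont
    obtain ⟨xb, hxbS, hxb⟩ := hS.exists_isMaxOn hSne hcont
    set a := ‖f xa‖ with hadef
    set b := ‖f xb‖ with hbdef
    have hxa1 : ‖xa‖ = 1 := mem_sphere_zero_iff_norm.mp hxaS
    have hxb1 : ‖xb‖ = 1 := mem_sphere_zero_iff_norm.mp hxbS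
    have h1e : (0:ℝ) < 1 + ε := by linarith
    have ha : (1 + ε)⁻¹ < a := (hf xa hxa1).1
    have hb : b < 1 + ε := (hf xb hxb1).2
    have ha0 : 0 < a := lt_trans (by positivity) ha
    have hainv : a⁻¹ < 1 + ε := by
      rw [← one_div, div_lt_iff₀ ha0]
      nlinarith [mul_lt_mul_of_pos_left ha h1e, mul_inv_cancel₀ (ne_of_gt h1e)]
    -- a strictly smaller almost-isometry constant
    set e := max (max (b - 1) (a⁻¹ - 1)) (ε / 2) with hedef
    have he : 0 < e := lt_of_lt_of_le (half_pos hε) (le_max_right _ _)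
    have heb : b ≤ 1 + e := by
      have h := (le_max_left (b - 1) (a⁻¹ - 1)).trans
        (le_max_left ((b - 1) ⊔ (a⁻¹ - 1)) (ε / 2))
      linarith
    have hea : a⁻¹ ≤ 1 + e := by
      have h := (le_max_right (b - 1) (a⁻¹ - 1)).trans
        (le_max_left ((b - 1) ⊔ (a⁻¹ - 1)) (ε / 2))
      linarith
    have helt : e < ε := by
      rw [hedef]
      exact max_lt (max_lt (by linarith) (by linarith)) (by linarith)
    -- the two-sided bounds on f with constant e
    have hlow : ∀ u : X, a * ‖u‖ ≤ ‖f u‖ := by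
      intro u
      rcases eq_or_ne u 0 with rfl | hu0
      · simp
      · have hun : (0:ℝ) < ‖u‖ := norm_pos_iff.mpr hu0
        have hv : ‖(‖u‖⁻¹ • u : X)‖ = 1 := by
          rw [norm_smul, Real.norm_eq_abs, abs_inv, abs_of_pos hun,
            inv_mul_cancel₀ hun.ne']
        have hva : a ≤ ‖f (‖u‖⁻¹ • u)‖ := hxa (mem_sphere_zero_iff_norm.mpr hv)
        rw [map_smul, norm_smul, Real.norm_eq_abs, abs_inv, abs_of_pos hun] at hva
        have h2 : a * ‖u‖ ≤ ‖u‖⁻¹ * ‖f u‖ * ‖u‖ := mul_le_mul_of_nonneg_right hva hun.le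
        have h3 : ‖u‖⁻¹ * ‖f u‖ * ‖u‖ = ‖f u‖ := by
          rw [mul_right_comm, inv_mul_cancel₀ hun.ne', one_mul]
        linarith
    have hhigh : ∀ u : X, ‖f u‖ ≤ b * ‖u‖ := by
      intro u
      rcases eq_or_ne u 0 with rfl | hu0
      · simp
      · have hun : (0:ℝ) < ‖u‖ := norm_pos_iff.mpr hu0
        have hv : ‖(‖u‖⁻¹ • u : X)‖ = 1 := by
          rw [norm_smul, Real.norm_eq_abs, abs_inv, abs_of_pos hun,
            inv_mul_cancel₀ hun.ne']
        have hvb : ‖f (‖u‖⁻¹ • u)‖ ≤ b := hxb (mem_sphere_zero_iff_norm.mpr hv)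
        rw [map_smul, norm_smul, Real.norm_eq_abs, abs_inv, abs_of_pos hun] at hvb
        have h2 : ‖u‖⁻¹ * ‖f u‖ * ‖u‖ ≤ b * ‖u‖ := mul_le_mul_of_nonneg_right hvb hun.le
        have h3 : ‖u‖⁻¹ * ‖f u‖ * ‖u‖ = ‖f u‖ := by
          rw [mul_right_comm, inv_mul_cancel₀ hun.ne', one_mul]
        linarith
    have hl : ∀ u : X, ‖u‖ ≤ (1 + e) * ‖f u‖ := by
      intro u
      have h1 := hlow u
      nlinarith [inv_mul_cancel₀ ha0.ne', norm_nonneg (f u), norm_nonneg u,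
        mul_le_mul_of_nonneg_right hea (norm_nonneg (f u)),
        mul_le_mul_of_nonneg_left h1 (inv_pos.mpr ha0).le]
    have hu : ∀ u : X, ‖f u‖ ≤ (1 + e) * ‖u‖ := fun u =>
      (hhigh u).trans (mul_le_mul_of_nonneg_right heb (norm_nonneg u))
    -- set up the Gurariĭ extension on the glue space
    set δ' := min δ ((ε - e) / (2 * e)) with hδ'def
    have hδ'0 : 0 < δ' := lt_min hδ (div_pos (by linarith) (by linarith))
    have hδ'δ : δ' ≤ δ := min_le_left _ _
    have hδ'e : δ' ≤ (ε - e) / (2 * e) := min_le_right _ _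
    set j1 := Glue.inl f e he hl hu with hj1def
    set j2 := Glue.inr f e he hl hu with hj2def
    set X' : Submodule ℝ (Glue f e he hl hu) := LinearMap.range j1 with hX'def
    set eqv := LinearEquiv.ofInjective j1 (Glue.inl_injective f e he hl hu) with heqvdef
    set f' : X' →ₗ[ℝ] E := X.subtype ∘ₗ (eqv.symm : X' ≃ₗ[ℝ] X).toLinearMap with hf'def
    have hf'val : ∀ (z : X') (x : X), j1 x = (z : Glue f e he hl hu) → f' z = (x : E) := by
      intro z x hx
      have hz : eqv x = z := Subtype.ext (by
        rw [heqvdef]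
        simpa [LinearEquiv.ofInjective_apply] using hx)
      have hsymm : eqv.symm z = x := by rw [← hz, LinearEquiv.symm_apply_apply]
      rw [hf'def]
      simp [hsymm]
    have hf'norm : ∀ z : X', ‖f' z‖ = ‖z‖ := by
      intro z
      obtain ⟨x, hx⟩ := LinearMap.mem_range.mp z.2
      rw [hf'val z x hx]
      have h1 : ‖z‖ = ‖(z : Glue f e he hl hu)‖ := rfl
      rw [h1, ← hx, Glue.norm_inl]
      rfl
    obtain ⟨G, hGinj, hGext, M, N, hM, hN, hMN⟩ :=
      hE.2.2 (Glue f e he hl hu) X' δ' hδ'0 f' hf'norm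
    have hext : ∀ x : X, G (j1 x) = (x : E) := by
      intro x
      have hmem : j1 x ∈ X' := LinearMap.mem_range_self _ x
      have h := hGext ⟨j1 x, hmem⟩
      rw [hf'val ⟨j1 x, hmem⟩ x rfl] at h
      exact h
    -- M and N are close to 1
    have hnj1 : ‖j1 x₀‖ = 1 := by rw [hj1def, Glue.norm_inl, hx₀]
    have hGx₀ : ‖G (j1 x₀)‖ = 1 := by
      rw [hext x₀]
      rw [show ‖(x₀ : E)‖ = ‖x₀‖ from rfl, hx₀]
    have hM1 : 1 ≤ M := by
      have := hM (j1 x₀)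
      rw [hGx₀, hnj1, mul_one] at this
      exact this
    have hN1 : 1 ≤ N := by
      have := hN (j1 x₀)
      rw [hGx₀, hnj1, mul_one] at this
      exact this
    have hMlt : M < 1 + δ' := by nlinarith
    have hNlt : N < 1 + δ' := by nlinarith
    refine ⟨G ∘ₗ j2, ?_, ?_⟩
    · -- δ-isometry
      intro y hy
      have hjy : ‖j2 y‖ = 1 := by rw [hj2def, Glue.norm_inr, hy]
      have hup := hM (j2 y)
      have hdown := hN (j2 y)
      rw [hjy, mul_one] at hup
      rw [hjy] at hdown
      have h1d : (0:ℝ) < 1 + δ := by linarith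
      have hN0 : 0 < N := by linarith
      have ht0 : 0 < ‖G (j2 y)‖ := by nlinarith
      constructor
      · rw [show (G ∘ₗ j2) y = G (j2 y) from rfl, ← one_div, div_lt_iff₀ h1d]
        nlinarith
      · rw [show (G ∘ₗ j2) y = G (j2 y) from rfl]
        linarith
    · -- the almost-inverse estimate
      intro x hx
      have hxn : (0:ℝ) < ‖x‖ := norm_pos_iff.mpr (fun h => hx (Subtype.ext (by
        simpa using congrArg Subtype.val h)))
      have hM0 : (0:ℝ) < M := by linarith
      have key : (G ∘ₗ j2) (f x) - (x : E) = G (j2 (f x) - j1 x) := by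
        rw [map_sub, hext x]
        rfl
      rw [key]
      calc ‖G (j2 (f x) - j1 x)‖ ≤ M * ‖j2 (f x) - j1 x‖ := hM _
        _ ≤ M * (e * ‖x‖) := by
            refine mul_le_mul_of_nonneg_left ?_ hM0.le
            exact Glue.norm_inr_sub_inl f e he hl hu x
        _ < ε * ‖x‖ := by
            have h2e : (0:ℝ) < 2 * e := by linarith
            have : δ' * (2 * e) ≤ ε - e := by
              rw [← le_div_iff₀ h2e]
              exact hδ'e
            have h3 : M * e < ε := by
              nlinarith [mul_lt_mul_of_pos_right hMlt he]
            nlinarith [mul_lt_mul_of_pos_right h3 hxn]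
end

section
/- Let X₀ ⊆ X₁ and Y₀ be finite-dimensional real Banach spaces and let f : X₀ → Y₀ be an ε-isometry for some ε > 0. Then there exist a finite-dimensional real Banach space Y₁ containing Y₀ as a subspace and a linear isometry g : X₁ → Y₁ such that ‖g|_{X₀} − f‖ < ε (i.e., ‖g x − f x‖ < ε · ‖x‖ for all nonzero x ∈ X₀, where f is viewed as taking values in Y₁). -/
noncomputable section EnlAux

variable {X₁ Y₀ : Type} [NormedAddCommGroup X₁] [NormedSpace ℝ X₁]
  [NormedAddCommGroup Y₀] [NormedSpace ℝ Y₀]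

/-- Type synonym for `Y₀ × X₁`, to carry a custom norm. -/
def EnlSpace (Y₀ X₁ : Type) : Type := Y₀ × X₁

instance : AddCommGroup (EnlSpace Y₀ X₁) := inferInstanceAs (AddCommGroup (Y₀ × X₁))
instance : Module ℝ (EnlSpace Y₀ X₁) := inferInstanceAs (Module ℝ (Y₀ × X₁))
instance [FiniteDimensional ℝ X₁] [FiniteDimensional ℝ Y₀] :
    FiniteDimensional ℝ (EnlSpace Y₀ X₁) :=
  inferInstanceAs (FiniteDimensional ℝ (Y₀ × X₁))

variable (X₀ : Submodule ℝ X₁) (f : X₀ →ₗ[ℝ] Y₀) (δ : ℝ)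

/-- The function whose infimum defines the norm. -/
def auxF (p : Y₀ × X₁) (a : X₀) : ℝ :=
  ‖p.1 + f a‖ + ‖p.2 - (a : X₁)‖ + δ * ‖(a : X₁)‖

def auxN (p : Y₀ × X₁) : ℝ := ⨅ a : X₀, auxF X₀ f δ p a

theorem auxF_nonneg (hδ : 0 < δ) (p : Y₀ × X₁) (a : X₀) : 0 ≤ auxF X₀ f δ p a := by
  unfold auxF
  have := hδ.le
  positivity

theorem auxF_bdd (hδ : 0 < δ) (p : Y₀ × X₁) : BddBelow (Set.range (auxF X₀ f δ p)) :=
  ⟨0, by rintro _ ⟨a, rfl⟩; exact auxF_nonneg X₀ f δ hδ p a⟩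

theorem auxN_le (hδ : 0 < δ) (p : Y₀ × X₁) (a : X₀) : auxN X₀ f δ p ≤ auxF X₀ f δ p a :=
  ciInf_le (auxF_bdd X₀ f δ hδ p) a

theorem le_auxN (p : Y₀ × X₁) (c : ℝ) (h : ∀ a : X₀, c ≤ auxF X₀ f δ p a) :
    c ≤ auxN X₀ f δ p := by
  haveI : Nonempty X₀ := ⟨0⟩
  exact le_ciInf h

theorem auxN_nonneg (hδ : 0 < δ) (p : Y₀ × X₁) : 0 ≤ auxN X₀ f δ p :=
  le_auxN X₀ f δ p 0 (auxF_nonneg X₀ f δ hδ p)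

theorem auxN_zero (hδ : 0 < δ) : auxN X₀ f δ 0 = 0 := by
  refine le_antisymm ?_ (auxN_nonneg X₀ f δ hδ 0)
  have h := auxN_le X₀ f δ hδ (0 : Y₀ × X₁) 0
  simpa [auxF] using h

theorem auxN_add_le (hδ : 0 < δ) (p q : Y₀ × X₁) :
    auxN X₀ f δ (p + q) ≤ auxN X₀ f δ p + auxN X₀ f δ q := by
  rw [← sub_le_iff_le_add']
  refine le_auxN X₀ f δ q _ fun b => ?_
  rw [sub_le_iff_le_add']
  rw [← sub_le_iff_le_add]
  refine le_auxN X₀ f δ p _ fun a => ?_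
  rw [sub_le_iff_le_add]
  calc auxN X₀ f δ (p + q) ≤ auxF X₀ f δ (p + q) (a + b) := auxN_le X₀ f δ hδ _ _
    _ ≤ auxF X₀ f δ p a + auxF X₀ f δ q b := by
        unfold auxF
        have e1 : (p + q).1 + f (a + b) = (p.1 + f a) + (q.1 + f b) := by
          simp [map_add]; abel
        have e2 : (p + q).2 - ((a + b : X₀) : X₁) = (p.2 - a) + (q.2 - b) := by
          simp; abel
        rw [e1, e2]
        have h1 := norm_add_le (p.1 + f a) (q.1 + f b)
        have h2 := norm_add_le (p.2 - (a : X₁)) (q.2 - (b : X₁))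
        have h3 : δ * ‖((a + b : X₀) : X₁)‖ ≤ δ * ‖(a : X₁)‖ + δ * ‖(b : X₁)‖ := by
          rw [← mul_add]
          exact mul_le_mul_of_nonneg_left (by simpa using norm_add_le (a : X₁) (b : X₁)) hδ.le
        linarith

theorem auxN_neg_le (hδ : 0 < δ) (p : Y₀ × X₁) : auxN X₀ f δ (-p) ≤ auxN X₀ f δ p := by
  refine le_auxN X₀ f δ p _ fun a => ?_
  calc auxN X₀ f δ (-p) ≤ auxF X₀ f δ (-p) (-a) := auxN_le X₀ f δ hδ _ _
    _ = auxF X₀ f δ p a := by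
        unfold auxF
        have e1 : (-p).1 + f (-a) = -(p.1 + f a) := by simp; abel
        have e2 : (-p).2 - ((-a : X₀) : X₁) = -(p.2 - a) := by simp; abel
        rw [e1, e2, norm_neg, norm_neg]
        simp

theorem auxN_neg (hδ : 0 < δ) (p : Y₀ × X₁) : auxN X₀ f δ (-p) = auxN X₀ f δ p := by
  refine le_antisymm (auxN_neg_le X₀ f δ hδ p) ?_
  have := auxN_neg_le X₀ f δ hδ (-p)
  simpa using this

theorem auxN_smul_le (hδ : 0 < δ) (c : ℝ) (p : Y₀ × X₁) :
    auxN X₀ f δ (c • p) ≤ |c| * auxN X₀ f δ p := by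
  rcases eq_or_ne c 0 with rfl | hc
  · simp [auxN_zero X₀ f δ hδ]
  · have hc' : (0 : ℝ) < |c| := abs_pos.2 hc
    rw [← div_le_iff₀' hc']
    refine le_auxN X₀ f δ p _ fun a => ?_
    rw [div_le_iff₀' hc']
    calc auxN X₀ f δ (c • p) ≤ auxF X₀ f δ (c • p) (c • a) := auxN_le X₀ f δ hδ _ _
      _ = |c| * auxF X₀ f δ p a := by
          unfold auxF
          have e1 : (c • p).1 + f (c • a) = c • (p.1 + f a) := by
            simp [map_smul, smul_add]
          have e2 : (c • p).2 - ((c • a : X₀) : X₁) = c • (p.2 - a) := by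
            simp [smul_sub]
          rw [e1, e2, Submodule.coe_smul, norm_smul, norm_smul, norm_smul, Real.norm_eq_abs]
          ring


theorem auxN_inl (hδ : 0 < δ) (hU : ∀ a : X₀, ‖f a‖ ≤ (1 + δ) * ‖(a : X₁)‖) (y : Y₀) :
    auxN X₀ f δ (y, 0) = ‖y‖ := by
  refine le_antisymm ?_ (le_auxN X₀ f δ _ _ fun a => ?_)
  · have h := auxN_le X₀ f δ hδ (y, 0) 0
    simpa [auxF] using h
  · have h1 : ‖y‖ ≤ ‖y + f a‖ + ‖f a‖ := by
      simpa using norm_add_le (y + f a) (-(f a))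
    have h2 := hU a
    have h3 : auxF X₀ f δ (y, 0) a
        = ‖y + f a‖ + ‖(a : X₁)‖ + δ * ‖(a : X₁)‖ := by
      simp [auxF]
    rw [h3]
    linarith

theorem auxN_inr (hδ : 0 < δ) (hL : ∀ a : X₀, (1 + δ)⁻¹ * ‖(a : X₁)‖ ≤ ‖f a‖) (x : X₁) :
    auxN X₀ f δ (0, x) = ‖x‖ := by
  refine le_antisymm ?_ (le_auxN X₀ f δ _ _ fun a => ?_)
  · have h := auxN_le X₀ f δ hδ (0, x) 0
    simpa [auxF] using h
  · have h1 : ‖x‖ ≤ ‖x - (a : X₁)‖ + ‖(a : X₁)‖ := by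
      simpa using norm_add_le (x - (a : X₁)) (a : X₁)
    have h2 := hL a
    have h3 : auxF X₀ f δ (0, x) a = ‖f a‖ + ‖x - (a : X₁)‖ + δ * ‖(a : X₁)‖ := by
      simp [auxF]
    have h4 : (0:ℝ) < 1 + δ := by linarith
    have h5 : (1 + δ) * (1 + δ)⁻¹ = 1 := mul_inv_cancel₀ h4.ne'
    have h6 : (1:ℝ) ≤ (1 + δ)⁻¹ + δ := by nlinarith [inv_pos.2 h4]
    have h7 : (0:ℝ) ≤ ‖(a : X₁)‖ := norm_nonneg _
    rw [h3]
    nlinarith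

theorem auxN_eq_zero (hδ : 0 < δ) (hU : ∀ a : X₀, ‖f a‖ ≤ (1 + δ) * ‖(a : X₁)‖)
    (p : Y₀ × X₁) (h : auxN X₀ f δ p = 0) : p = 0 := by
  have key : ∀ a : X₀, δ / (2 + δ) * (‖p.1‖ + ‖p.2‖) ≤ auxF X₀ f δ p a := by
    intro a
    have h1 : ‖p.1‖ ≤ ‖p.1 + f a‖ + ‖f a‖ := by
      simpa using norm_add_le (p.1 + f a) (-(f a))
    have h2 : ‖p.2‖ ≤ ‖p.2 - (a : X₁)‖ + ‖(a : X₁)‖ := by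
      simpa using norm_add_le (p.2 - (a : X₁)) (a : X₁)
    have h3 := hU a
    have h4 : (0:ℝ) ≤ ‖(a : X₁)‖ := norm_nonneg _
    have h5 : (0:ℝ) ≤ ‖p.1 + f a‖ := norm_nonneg _
    have h6 : (0:ℝ) ≤ ‖p.2 - (a : X₁)‖ := norm_nonneg _
    unfold auxF
    rw [div_mul_eq_mul_div, div_le_iff₀ (by linarith : (0:ℝ) < 2 + δ)]
    nlinarith
  have hS : δ / (2 + δ) * (‖p.1‖ + ‖p.2‖) ≤ 0 := by
    rw [← h]; exact le_auxN X₀ f δ p _ key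
  have hc : (0:ℝ) < δ / (2 + δ) := div_pos hδ (by linarith)
  have hS2 : ‖p.1‖ + ‖p.2‖ ≤ 0 := by nlinarith [norm_nonneg p.1, norm_nonneg p.2]
  have e1 : p.1 = 0 := norm_le_zero_iff.1 (by linarith [norm_nonneg p.2])
  have e2 : p.2 = 0 := norm_le_zero_iff.1 (by linarith [norm_nonneg p.1])
  exact Prod.ext e1 e2

theorem auxN_approx (hδ : 0 < δ) (x : X₀) :
    auxN X₀ f δ (-(f x), (x : X₁)) ≤ δ * ‖(x : X₁)‖ := by
  have h := auxN_le X₀ f δ hδ (-(f x), (x : X₁)) x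
  simpa [auxF] using h

end EnlAux

theorem exists_delta {X₁ Y₀ : Type} [NormedAddCommGroup X₁] [NormedSpace ℝ X₁]
    [FiniteDimensional ℝ X₁] [NormedAddCommGroup Y₀] [NormedSpace ℝ Y₀]
    (X₀ : Submodule ℝ X₁) (ε : ℝ) (hε : 0 < ε) (f : X₀ →ₗ[ℝ] Y₀)
    (hf : IsEpsIsometry ε f) :
    ∃ δ : ℝ, 0 < δ ∧ δ < ε ∧ (∀ a : X₀, ‖f a‖ ≤ (1 + δ) * ‖(a : X₁)‖) ∧
      (∀ a : X₀, (1 + δ)⁻¹ * ‖(a : X₁)‖ ≤ ‖f a‖) := by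
  have h1ε : (0:ℝ) < 1 + ε := by linarith
  by_cases hsub : ∀ a : X₀, a = 0
  · refine ⟨ε / 2, half_pos hε, half_lt_self hε, fun a => ?_, fun a => ?_⟩
    · rw [hsub a]; simp
    · rw [hsub a]; simp
  · push_neg at hsub
    obtain ⟨a₀, ha₀⟩ := hsub
    have hu₀ : ‖(‖a₀‖⁻¹ • a₀ : X₀)‖ = 1 := norm_smul_inv_norm ha₀
    have hScomp : IsCompact (Metric.sphere (0 : X₀) 1) := isCompact_sphere 0 1
    have hSne : (Metric.sphere (0 : X₀) 1).Nonempty :=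
      ⟨‖a₀‖⁻¹ • a₀, mem_sphere_zero_iff_norm.2 hu₀⟩
    have hcont : Continuous fun a : X₀ => ‖f a‖ := f.continuous_of_finiteDimensional.norm
    obtain ⟨aM, haM, hM⟩ := hScomp.exists_isMaxOn hSne hcont.continuousOn
    obtain ⟨am, ham, hm⟩ := hScomp.exists_isMinOn hSne hcont.continuousOn
    set M := ‖f aM‖ with hMdef
    set m := ‖f am‖ with hmdef
    have hM1 : M < 1 + ε := (hf aM (mem_sphere_zero_iff_norm.1 haM)).2
    have hm1 : (1 + ε)⁻¹ < m := (hf am (mem_sphere_zero_iff_norm.1 ham)).1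
    have hm0 : 0 < m := lt_trans (inv_pos.2 h1ε) hm1
    have hminv : m⁻¹ < 1 + ε := by
      nlinarith [mul_inv_cancel₀ hm0.ne', mul_inv_cancel₀ h1ε.ne', inv_pos.2 hm0,
        inv_pos.2 h1ε]
    set δ := max (max (M - 1) (m⁻¹ - 1)) (ε / 2) with hδdef
    have hδ0 : 0 < δ := lt_of_lt_of_le (half_pos hε) (le_max_right _ _)
    have hδε : δ < ε :=
      max_lt (max_lt (by linarith) (by linarith)) (half_lt_self hε)
    have hMδ : M ≤ 1 + δ := by
      have := le_max_left (max (M - 1) (m⁻¹ - 1)) (ε / 2)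
      have := le_max_left (M - 1) (m⁻¹ - 1)
      simp only [hδdef]; linarith [le_max_left (max (M - 1) (m⁻¹ - 1)) (ε / 2),
        le_max_left (M - 1) (m⁻¹ - 1)]
    have hmδ : m⁻¹ ≤ 1 + δ := by
      linarith [le_max_left (max (M - 1) (m⁻¹ - 1)) (ε / 2),
        le_max_right (M - 1) (m⁻¹ - 1),
        le_trans (le_max_right (M - 1) (m⁻¹ - 1))
          (le_max_left (max (M - 1) (m⁻¹ - 1)) (ε / 2))]
    have h1δ : (0:ℝ) < 1 + δ := by linarith
    have hmδ' : (1 + δ)⁻¹ ≤ m := by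
      rw [inv_le_comm₀ h1δ hm0]
      exact hmδ
    -- key scaling facts
    have key : ∀ a : X₀, a ≠ 0 → ‖f a‖ = ‖a‖ * ‖f (‖a‖⁻¹ • a)‖ := by
      intro a ha
      have hna : ‖a‖ ≠ 0 := norm_ne_zero_iff.2 ha
      rw [map_smul, norm_smul, Real.norm_eq_abs, abs_inv, abs_norm, ← mul_assoc,
        mul_inv_cancel₀ hna, one_mul]
    refine ⟨δ, hδ0, hδε, fun a => ?_, fun a => ?_⟩
    · rcases eq_or_ne a 0 with rfl | ha
      · simp
      · have hu : (‖a‖⁻¹ • a : X₀) ∈ Metric.sphere (0 : X₀) 1 :=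
          mem_sphere_zero_iff_norm.2 (norm_smul_inv_norm ha)
        have hub : ‖f (‖a‖⁻¹ • a)‖ ≤ M := hM hu
        rw [key a ha]
        simp only [Submodule.coe_norm] at hub ⊢
        nlinarith [norm_nonneg ((a : X₁)), norm_nonneg (f (‖(a : X₁)‖⁻¹ • a))]
    · rcases eq_or_ne a 0 with rfl | ha
      · simp
      · have hu : (‖a‖⁻¹ • a : X₀) ∈ Metric.sphere (0 : X₀) 1 :=
          mem_sphere_zero_iff_norm.2 (norm_smul_inv_norm ha)
        have hlb : m ≤ ‖f (‖a‖⁻¹ • a)‖ := hm hu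
        rw [key a ha]
        simp only [Submodule.coe_norm] at hlb ⊢
        nlinarith [mul_le_mul_of_nonneg_right (hmδ'.trans hlb) (norm_nonneg ((a : X₁)))]

/-- If `X₀ ⊆ X₁` and `Y₀` are finite-dimensional real Banach spaces and `f : X₀ → Y₀`
is an `ε`-isometry, then there are a finite-dimensional real Banach space `Y₁`
containing `Y₀` (via a linear isometry `ι : Y₀ → Y₁`) and a linear isometry
`g : X₁ → Y₁` such that `‖g ∣ X₀ - f‖ < ε`. -/
theorem exists_isometry_approximating_epsIsometry
    {X₁ Y₀ : Type} [NormedAddCommGroup X₁] [NormedSpace ℝ X₁] [FiniteDimensional ℝ X₁]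
    [NormedAddCommGroup Y₀] [NormedSpace ℝ Y₀] [FiniteDimensional ℝ Y₀]
    (X₀ : Submodule ℝ X₁)
    (ε : ℝ) (hε : 0 < ε) (f : X₀ →ₗ[ℝ] Y₀) (hf : IsEpsIsometry ε f) :
    ∃ (Y₁ : Type) (_ : NormedAddCommGroup Y₁) (_ : NormedSpace ℝ Y₁),
      FiniteDimensional ℝ Y₁ ∧
      ∃ (ι : Y₀ →ₗ[ℝ] Y₁) (g : X₁ →ₗ[ℝ] Y₁),
        (∀ y : Y₀, ‖ι y‖ = ‖y‖) ∧
        (∀ x : X₁, ‖g x‖ = ‖x‖) ∧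
        ∀ x : X₀, x ≠ 0 → ‖g (x : X₁) - ι (f x)‖ < ε * ‖x‖ := by
  obtain ⟨δ, hδ0, hδε, hU, hL⟩ := exists_delta X₀ ε hε f hf
  letI : NormedAddCommGroup (EnlSpace Y₀ X₁) :=
    AddGroupNorm.toNormedAddCommGroup
      { toFun := auxN X₀ f δ
        map_zero' := auxN_zero X₀ f δ hδ0
        add_le' := auxN_add_le X₀ f δ hδ0
        neg' := auxN_neg X₀ f δ hδ0
        eq_zero_of_map_eq_zero' := fun p hp => auxN_eq_zero X₀ f δ hδ0 hU p hp }
  letI : NormedSpace ℝ (EnlSpace Y₀ X₁) :=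
    { norm_smul_le := fun c p => by
        have h := auxN_smul_le X₀ f δ hδ0 c p
        rw [Real.norm_eq_abs]; exact h }
  let ι' : Y₀ →ₗ[ℝ] EnlSpace Y₀ X₁ :=
    { toFun := fun y => ((y, 0) : Y₀ × X₁)
      map_add' := fun a b => by
        show ((a + b, 0) : Y₀ × X₁) = (a, 0) + (b, 0); exact Prod.ext_iff.2 ⟨rfl, (add_zero (0 : X₁)).symm⟩
      map_smul' := fun c a => by
        show ((c • a, 0) : Y₀ × X₁) = c • (a, 0); exact Prod.ext_iff.2 ⟨rfl, (smul_zero (c : ℝ) : c • (0 : X₁) = 0).symm⟩ }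
  let g' : X₁ →ₗ[ℝ] EnlSpace Y₀ X₁ :=
    { toFun := fun x => ((0, x) : Y₀ × X₁)
      map_add' := fun a b => by
        show ((0, a + b) : Y₀ × X₁) = (0, a) + (0, b); exact Prod.ext_iff.2 ⟨(add_zero (0 : Y₀)).symm, rfl⟩
      map_smul' := fun c a => by
        show ((0, c • a) : Y₀ × X₁) = c • (0, a); exact Prod.ext_iff.2 ⟨(smul_zero (c : ℝ) : c • (0 : Y₀) = 0).symm, rfl⟩ }
  refine ⟨EnlSpace Y₀ X₁, inferInstance, inferInstance, inferInstance, ι', g',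
    fun y => auxN_inl X₀ f δ hδ0 hU y,
    fun x => auxN_inr X₀ f δ hδ0 hL x, fun x hx => ?_⟩
  have e : g' (x : X₁) - ι' (f x) = ((-(f x), (x : X₁)) : Y₀ × X₁) := by
    show ((0, (x : X₁)) : Y₀ × X₁) - ((f x, 0) : Y₀ × X₁) = (-(f x), (x : X₁))
    ext <;> simp
  have hx1 : (x : X₁) ≠ 0 := fun h => hx (Subtype.ext h)
  have hx2 : 0 < ‖(x : X₁)‖ := norm_pos_iff.2 hx1
  calc ‖g' (x : X₁) - ι' (f x)‖ ≤ δ * ‖(x : X₁)‖ := by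
        rw [e]; exact auxN_approx X₀ f δ hδ0 x
    _ < ε * ‖(x : X₁)‖ := by nlinarith
    _ = ε * ‖x‖ := by rw [Submodule.coe_norm]
end

section
/- Every separable real Banach space embeds isometrically into any Gurariĭ space: if G is a Gurariĭ space and X is a separable real Banach space, then there exists a linear isometry f : X → G. -/
open Filter Topology


section Zt
variable {G : Type} [NormedAddCommGroup G] [NormedSpace ℝ G]
variable {Y : Type} [NormedAddCommGroup Y] [NormedSpace ℝ Y]

/-- Type synonym for `Y × X` carrying a custom norm. -/
def Zt (Y : Type) [NormedAddCommGroup Y] [NormedSpace ℝ Y] (X : Submodule ℝ Y) : Type := Y × X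

instance (X : Submodule ℝ Y) : AddCommGroup (Zt Y X) := inferInstanceAs (AddCommGroup (Y × X))
instance (X : Submodule ℝ Y) : Module ℝ (Zt Y X) := inferInstanceAs (Module ℝ (Y × X))

def Zt.mk {X : Submodule ℝ Y} (y : Y) (x : X) : Zt Y X := show Y × X from (y, x)
def Zt.fst {X : Submodule ℝ Y} (p : Zt Y X) : Y := (show Y × X from p).1
def Zt.snd {X : Submodule ℝ Y} (p : Zt Y X) : X := (show Y × X from p).2

@[simp] lemma Zt.fst_mk {X : Submodule ℝ Y} (y : Y) (x : X) : (Zt.mk y x).fst = y := rfl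
@[simp] lemma Zt.snd_mk {X : Submodule ℝ Y} (y : Y) (x : X) : (Zt.mk y x).snd = x := rfl
@[simp] lemma Zt.fst_add {X : Submodule ℝ Y} (p q : Zt Y X) : (p + q).fst = p.fst + q.fst := rfl
@[simp] lemma Zt.snd_add {X : Submodule ℝ Y} (p q : Zt Y X) : (p + q).snd = p.snd + q.snd := rfl
@[simp] lemma Zt.fst_smul {X : Submodule ℝ Y} (c : ℝ) (p : Zt Y X) : (c • p).fst = c • p.fst := rfl
@[simp] lemma Zt.snd_smul {X : Submodule ℝ Y} (c : ℝ) (p : Zt Y X) : (c • p).snd = c • p.snd := rfl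
@[simp] lemma Zt.fst_neg {X : Submodule ℝ Y} (p : Zt Y X) : (-p).fst = -p.fst := rfl
@[simp] lemma Zt.snd_neg {X : Submodule ℝ Y} (p : Zt Y X) : (-p).snd = -p.snd := rfl
@[simp] lemma Zt.fst_sub {X : Submodule ℝ Y} (p q : Zt Y X) : (p - q).fst = p.fst - q.fst := rfl
@[simp] lemma Zt.snd_sub {X : Submodule ℝ Y} (p q : Zt Y X) : (p - q).snd = p.snd - q.snd := rfl
@[simp] lemma Zt.fst_zero {X : Submodule ℝ Y} : (0 : Zt Y X).fst = 0 := rfl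
@[simp] lemma Zt.snd_zero {X : Submodule ℝ Y} : (0 : Zt Y X).snd = 0 := rfl

lemma Zt.ext {X : Submodule ℝ Y} {p q : Zt Y X} (h1 : p.fst = q.fst) (h2 : p.snd = q.snd) :
    p = q := Prod.ext h1 h2

def jmap (X : Submodule ℝ Y) : Y →ₗ[ℝ] Zt Y X where
  toFun y := Zt.mk y 0
  map_add' a b := by apply Zt.ext <;> simp
  map_smul' c a := by apply Zt.ext <;> simp

def kmap (X : Submodule ℝ Y) : X →ₗ[ℝ] Zt Y X where
  toFun x := Zt.mk 0 x
  map_add' a b := by apply Zt.ext <;> simp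
  map_smul' c a := by apply Zt.ext <;> simp

def sndmap (X : Submodule ℝ Y) : Zt Y X →ₗ[ℝ] X where
  toFun := Zt.snd
  map_add' a b := by simp
  map_smul' c a := by simp

@[simp] lemma jmap_apply (X : Submodule ℝ Y) (y : Y) : jmap X y = Zt.mk y 0 := rfl
@[simp] lemma kmap_apply (X : Submodule ℝ Y) (x : X) : kmap X x = Zt.mk 0 x := rfl
@[simp] lemma sndmap_apply (X : Submodule ℝ Y) (p : Zt Y X) : sndmap X p = p.snd := rfl

variable {X : Submodule ℝ Y}

noncomputable def zN (f : X →ₗ[ℝ] G) (ε : ℝ) (p : Zt Y X) : ℝ :=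
  sInf (Set.range fun u : X => ‖p.fst + (u : Y)‖ + ‖f (p.snd - u)‖ + ε * ‖u‖)

lemma zN_le (f : X →ₗ[ℝ] G) {ε : ℝ} (hε : 0 ≤ ε) (p : Zt Y X) (u : X) :
    zN f ε p ≤ ‖p.fst + (u : Y)‖ + ‖f (p.snd - u)‖ + ε * ‖u‖ := by
  refine csInf_le ⟨0, ?_⟩ ⟨u, rfl⟩
  rintro t ⟨v, rfl⟩
  positivity

lemma le_zN (f : X →ₗ[ℝ] G) (ε : ℝ) (p : Zt Y X) (c : ℝ)
    (h : ∀ u : X, c ≤ ‖p.fst + (u : Y)‖ + ‖f (p.snd - u)‖ + ε * ‖u‖) : c ≤ zN f ε p :=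
  le_csInf (Set.range_nonempty _) (by rintro t ⟨v, rfl⟩; exact h v)

lemma zN_nonneg (f : X →ₗ[ℝ] G) {ε : ℝ} (hε : 0 ≤ ε) (p : Zt Y X) : 0 ≤ zN f ε p :=
  le_zN f ε p 0 fun u => by positivity

lemma zN_jmap (f : X →ₗ[ℝ] G) {ε : ℝ} (hε : 0 ≤ ε)
    (hfl : ∀ x : X, (1 - ε) * ‖x‖ ≤ ‖f x‖) (y : Y) :
    zN f ε (jmap X y) = ‖y‖ := by
  apply le_antisymm
  · have := zN_le f hε (jmap X y) 0
    simpa using this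
  · apply le_zN
    intro u
    simp only [jmap_apply, Zt.fst_mk, Zt.snd_mk, zero_sub]
    have h1 : ‖y‖ - ‖(u : Y)‖ ≤ ‖y + (u : Y)‖ := by
      have := norm_sub_norm_le y (-(u : Y))
      simpa [sub_neg_eq_add] using this
    have h2 : (1 - ε) * ‖u‖ ≤ ‖f (-u)‖ := by simpa using hfl (-u)
    have h3 : ‖(u : Y)‖ = ‖u‖ := rfl
    nlinarith [norm_nonneg u]

lemma zN_kmap (f : X →ₗ[ℝ] G) {ε : ℝ} (hε : 0 ≤ ε)
    (hfu : ∀ x : X, ‖f x‖ ≤ (1 + ε) * ‖x‖) (x : X) :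
    zN f ε (kmap X x) = ‖f x‖ := by
  apply le_antisymm
  · have := zN_le f hε (kmap X x) 0
    simpa using this
  · apply le_zN
    intro u
    simp only [kmap_apply, Zt.fst_mk, Zt.snd_mk, zero_add]
    have h1 : ‖f x‖ - ‖f u‖ ≤ ‖f (x - u)‖ := by
      have := norm_sub_norm_le (f x) (f u)
      rw [← map_sub] at this
      exact this
    have h2 : ‖f u‖ ≤ (1 + ε) * ‖u‖ := hfu u
    have h3 : ‖(u : Y)‖ = ‖u‖ := rfl
    nlinarith [norm_nonneg u]

lemma zN_diag (f : X →ₗ[ℝ] G) {ε : ℝ} (hε : 0 ≤ ε) (x : X) :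
    zN f ε (jmap X (x : Y) - kmap X x) ≤ ε * ‖x‖ := by
  have h := zN_le f hε (jmap X (x : Y) - kmap X x) (-x)
  have h1 : (jmap X (x : Y) - kmap X x).fst + ((-x : X) : Y) = 0 := by
    simp
  have h2 : (jmap X (x : Y) - kmap X x).snd - (-x) = 0 := by
    simp
  rw [h1, h2] at h
  simpa using h

lemma zN_add_le (f : X →ₗ[ℝ] G) {ε : ℝ} (hε : 0 ≤ ε) (p q : Zt Y X) :
    zN f ε (p + q) ≤ zN f ε p + zN f ε q := by
  apply le_of_forall_pos_le_add
  intro η hη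
  have hp : zN f ε p < zN f ε p + η / 2 := by linarith
  have hq : zN f ε q < zN f ε q + η / 2 := by linarith
  obtain ⟨a, ⟨u, rfl⟩, hu⟩ := exists_lt_of_csInf_lt (Set.range_nonempty _) hp
  obtain ⟨b, ⟨v, rfl⟩, hv⟩ := exists_lt_of_csInf_lt (Set.range_nonempty _) hq
  have key := zN_le f hε (p + q) (u + v)
  have h1 : ‖(p + q).fst + ((u + v : X) : Y)‖ ≤ ‖p.fst + (u : Y)‖ + ‖q.fst + (v : Y)‖ := by
    have e : (p + q).fst + ((u + v : X) : Y) = (p.fst + (u : Y)) + (q.fst + (v : Y)) := by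
      push_cast [Zt.fst_add]
      abel
    rw [e]; exact norm_add_le _ _
  have h2 : ‖f ((p + q).snd - (u + v))‖ ≤ ‖f (p.snd - u)‖ + ‖f (q.snd - v)‖ := by
    have e : (p + q).snd - (u + v) = (p.snd - u) + (q.snd - v) := by
      rw [Zt.snd_add]; abel
    rw [e, map_add]; exact norm_add_le _ _
  have h3 : ε * ‖u + v‖ ≤ ε * ‖u‖ + ε * ‖v‖ := by
    have := norm_add_le u v
    nlinarith
  linarith

lemma zN_smul_le (f : X →ₗ[ℝ] G) {ε : ℝ} (hε : 0 ≤ ε) (c : ℝ) (p : Zt Y X) :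
    zN f ε (c • p) ≤ |c| * zN f ε p := by
  rcases eq_or_ne c 0 with rfl | hc
  · have h0 : (0 : ℝ) • p = 0 := zero_smul ℝ p
    rw [h0]
    have h : zN f ε (0 : Zt Y X) ≤ 0 := by
      have := zN_le f hε (0 : Zt Y X) 0
      simpa using this
    simpa using h
  · have habs : 0 < |c| := abs_pos.mpr hc
    have key : zN f ε (c • p) / |c| ≤ zN f ε p := by
      apply le_zN
      intro u
      have key := zN_le f hε (c • p) (c • u)
      have h1 : ‖(c • p).fst + ((c • u : X) : Y)‖ = |c| * ‖p.fst + (u : Y)‖ := by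
        have e : (c • p).fst + ((c • u : X) : Y) = c • (p.fst + (u : Y)) := by
          push_cast [Zt.fst_smul]
          simp [smul_add]
        rw [e, norm_smul, Real.norm_eq_abs]
      have h2 : ‖f ((c • p).snd - c • u)‖ = |c| * ‖f (p.snd - u)‖ := by
        have e : (c • p).snd - c • u = c • (p.snd - u) := by
          rw [Zt.snd_smul, smul_sub]
        rw [e, map_smul, norm_smul, Real.norm_eq_abs]
      have h3 : ε * ‖c • u‖ = |c| * (ε * ‖u‖) := by
        rw [norm_smul, Real.norm_eq_abs]; ring
      rw [h1, h2, h3] at key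
      rw [div_le_iff₀ habs]
      nlinarith
    rw [div_le_iff₀ habs] at key
    linarith [key]

lemma zN_smul (f : X →ₗ[ℝ] G) {ε : ℝ} (hε : 0 ≤ ε) (c : ℝ) (p : Zt Y X) :
    zN f ε (c • p) = |c| * zN f ε p := by
  rcases eq_or_ne c 0 with rfl | hc
  · have h0 : (0 : ℝ) • p = 0 := zero_smul ℝ p
    rw [h0]
    have h1 : zN f ε (0 : Zt Y X) ≤ 0 := by
      have := zN_le f hε (0 : Zt Y X) 0
      simpa using this
    have h2 := zN_nonneg f hε (0 : Zt Y X)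
    simp [le_antisymm h1 h2]
  · refine le_antisymm (zN_smul_le f hε c p) ?_
    have h := zN_smul_le f hε c⁻¹ (c • p)
    rw [inv_smul_smul₀ hc, abs_inv] at h
    have habs : 0 < |c| := abs_pos.mpr hc
    calc |c| * zN f ε p ≤ |c| * (|c|⁻¹ * zN f ε (c • p)) :=
          mul_le_mul_of_nonneg_left h habs.le
      _ = zN f ε (c • p) := by field_simp

lemma zN_eq_zero (f : X →ₗ[ℝ] G) {ε : ℝ} (hε0 : 0 < ε) (hε1 : ε < 1)
    (hfl : ∀ x : X, (1 - ε) * ‖x‖ ≤ ‖f x‖) (p : Zt Y X) (hp : zN f ε p = 0) : p = 0 := by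
  have hfst : ‖p.fst‖ ≤ 0 := by
    have key : ‖p.fst‖ / (1 + ε⁻¹) ≤ zN f ε p := by
      apply le_zN
      intro u
      rw [div_le_iff₀ (by positivity)]
      set A := ‖p.fst + (u : Y)‖ with hA
      set F := ‖f (p.snd - u)‖ with hF
      set U := ‖u‖ with hU
      have t1 : ‖p.fst‖ ≤ A + U := by
        have h := norm_add_le (p.fst + (u : Y)) (-(u : Y))
        simp at h; exact h
      have t2 : 0 ≤ F := norm_nonneg _
      have t3 : 0 ≤ A := norm_nonneg _
      have t4 : 0 ≤ U := norm_nonneg _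
      have h4 : ε⁻¹ * (ε * U) ≤ ε⁻¹ * (A + F + ε * U) := by
        apply mul_le_mul_of_nonneg_left _ (inv_nonneg.mpr hε0.le)
        linarith
      have h5 : ε⁻¹ * (ε * U) = U := by field_simp
      have h6 : (A + F + ε * U) * (1 + ε⁻¹) = (A + F + ε * U) + ε⁻¹ * (A + F + ε * U) := by
        ring
      have t5 : 0 ≤ ε * U := by positivity
      linarith
    rw [hp] at key
    have hpos : 0 < 1 + ε⁻¹ := by positivity
    rw [div_le_iff₀ hpos] at key
    linarith [key]
  have hsnd : ‖p.snd‖ ≤ 0 := by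
    have h1ε : 0 < 1 - ε := by linarith
    have key : ‖p.snd‖ / ((1 - ε)⁻¹ + ε⁻¹) ≤ zN f ε p := by
      apply le_zN
      intro u
      have hd : 0 < (1 - ε)⁻¹ + ε⁻¹ := by positivity
      rw [div_le_iff₀ hd]
      set A := ‖p.fst + (u : Y)‖ with hA
      set F := ‖f (p.snd - u)‖ with hF
      set U := ‖u‖ with hU
      have t1 : ‖p.snd‖ ≤ ‖p.snd - u‖ + U := by
        have h := norm_add_le (p.snd - u) u
        simp at h; exact h
      have t2 : (1 - ε) * ‖p.snd - u‖ ≤ F := hfl _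
      have e1 : ‖p.snd - u‖ ≤ (1 - ε)⁻¹ * F := by
        rw [← le_div_iff₀' h1ε] at t2
        rw [div_eq_inv_mul] at t2
        exact t2
      have t3 : 0 ≤ A := norm_nonneg _
      have t4 : 0 ≤ U := norm_nonneg _
      have t5 : 0 ≤ F := norm_nonneg _
      have h4 : ε⁻¹ * (ε * U) = U := by field_simp
      have h5 : ε⁻¹ * (ε * U) ≤ ε⁻¹ * (A + F + ε * U) := by
        apply mul_le_mul_of_nonneg_left _ (inv_nonneg.mpr hε0.le)
        linarith
      have h6 : (1 - ε)⁻¹ * F ≤ (1 - ε)⁻¹ * (A + F + ε * U) := by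
        apply mul_le_mul_of_nonneg_left _ (inv_nonneg.mpr h1ε.le)
        have : 0 ≤ ε * U := by positivity
        linarith
      have h7 : (A + F + ε * U) * ((1 - ε)⁻¹ + ε⁻¹)
          = (1 - ε)⁻¹ * (A + F + ε * U) + ε⁻¹ * (A + F + ε * U) := by ring
      linarith
    rw [hp] at key
    have hd : 0 < (1 - ε)⁻¹ + ε⁻¹ := by positivity
    rw [div_le_iff₀ hd] at key
    linarith [key]
  have h1 : p.fst = 0 := norm_le_zero_iff.mp hfst
  have h2 : p.snd = 0 := norm_le_zero_iff.mp hsnd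
  exact Zt.ext (by simp [h1]) (by simp [h2])

end Zt


set_option maxHeartbeats 1000000 in
theorem lemmaE {G : Type} [NormedAddCommGroup G] [NormedSpace ℝ G] (hG : IsGurarii G)
    (Y : Type) [NormedAddCommGroup Y] [NormedSpace ℝ Y] [FiniteDimensional ℝ Y]
    (X : Submodule ℝ Y) (f : X →ₗ[ℝ] G) {ε δ : ℝ} (hε0 : 0 < ε) (hε1 : ε < 1) (hδ : 0 < δ)
    (hfu : ∀ x : X, ‖f x‖ ≤ (1 + ε) * ‖x‖) (hfl : ∀ x : X, (1 - ε) * ‖x‖ ≤ ‖f x‖) :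
    ∃ h : Y →ₗ[ℝ] G, (∀ y, ‖h y‖ ≤ (1 + δ) * ‖y‖) ∧ (∀ y, ‖y‖ ≤ (1 + δ) * ‖h y‖) ∧
      (∀ x : X, ‖h ↑x - f x‖ ≤ (1 + δ) * ε * ‖x‖) := by
  classical
  letI : Norm (Zt Y X) := ⟨zN f ε⟩
  have hzero : zN f ε (0 : Zt Y X) = 0 := by
    have h1 : zN f ε (0 : Zt Y X) ≤ 0 := by
      have := zN_le f hε0.le (0 : Zt Y X) 0
      simpa using this
    exact le_antisymm h1 (zN_nonneg f hε0.le 0)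
  have core : NormedSpace.Core ℝ (Zt Y X) :=
    { norm_nonneg := zN_nonneg f hε0.le
      norm_smul := fun c p => by
        rw [Real.norm_eq_abs]; exact zN_smul f hε0.le c p
      norm_triangle := zN_add_le f hε0.le
      norm_eq_zero_iff := fun p => by
        constructor
        · exact zN_eq_zero f hε0 hε1 hfl p
        · rintro rfl; exact hzero }
  letI : NormedAddCommGroup (Zt Y X) := NormedAddCommGroup.ofCore core
  letI : NormedSpace ℝ (Zt Y X) := NormedSpace.ofCore core
  haveI : FiniteDimensional ℝ (Zt Y X) := inferInstanceAs (FiniteDimensional ℝ (Y × X))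
  have nrm : ∀ p : Zt Y X, ‖p‖ = zN f ε p := fun _ => rfl
  set X₁ : Submodule ℝ (Zt Y X) := LinearMap.range (kmap X) with hX₁
  set f₁ : X₁ →ₗ[ℝ] G := (f.comp (sndmap X)).comp X₁.subtype with hf₁
  have hiso : ∀ w : X₁, ‖f₁ w‖ = ‖w‖ := by
    rintro ⟨w, x, rfl⟩
    have e1 : f₁ ⟨kmap X x, ⟨x, rfl⟩⟩ = f x := by
      simp [hf₁]
    rw [e1]
    have e2 : ‖(⟨kmap X x, ⟨x, rfl⟩⟩ : X₁)‖ = zN f ε (kmap X x) := rfl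
    rw [e2, zN_kmap f hε0.le hfu]
  obtain ⟨g, hginj, hgext, M, N', hgu, hgl, hMN⟩ := hG.2.2 (Zt Y X) X₁ δ hδ f₁ hiso
  have hjnorm : ∀ y : Y, ‖jmap X y‖ = ‖y‖ := fun y => by
    rw [nrm, zN_jmap f hε0.le hfl]
  by_cases hbot : X = ⊥
  · -- X is trivial
    have hzeroX : ∀ x : X, x = 0 := by
      intro x
      have hx : (x : Y) ∈ (⊥ : Submodule ℝ Y) := by rw [← hbot]; exact x.2
      rw [Submodule.mem_bot] at hx
      exact Subtype.ext hx
    rcases subsingleton_or_nontrivial Y with hY | hY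
    · refine ⟨0, ?_, ?_, ?_⟩
      · intro y; rw [Subsingleton.elim y 0]; simp
      · intro y; rw [Subsingleton.elim y 0]; simp
      · intro x; rw [hzeroX x]; simp
    · obtain ⟨y₀, hy₀⟩ := exists_ne (0 : Y)
      have hy₀n : 0 < ‖y₀‖ := norm_pos_iff.mpr hy₀
      have hz₀ : ‖jmap X y₀‖ = ‖y₀‖ := hjnorm y₀
      have h2 := hgl (jmap X y₀)
      rw [hz₀] at h2
      have hg₀ : 0 < ‖g (jmap X y₀)‖ := by
        by_contra hcon
        push_neg at hcon
        have heq : ‖g (jmap X y₀)‖ = 0 := le_antisymm hcon (norm_nonneg _)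
        rw [heq, mul_zero] at h2
        linarith
      have hN' : 0 < N' := by nlinarith
      have hM : 0 < M := by
        have h3 := hgu (jmap X y₀)
        rw [hz₀] at h3
        nlinarith
      set s := Real.sqrt (N' / M) with hs
      have hspos : 0 < s := Real.sqrt_pos.mpr (by positivity)
      have hsM : s * M = Real.sqrt (N' * M) := by
        rw [hs, ← Real.sqrt_sq hM.le, ← Real.sqrt_mul (by positivity)]
        congr 1
        field_simp
        ring_nf; rw [Real.sq_sqrt (by positivity)]
      have hNs : N' = Real.sqrt (N' * M) * s := by
        rw [hs, ← Real.sqrt_mul (by positivity)]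
        rw [← Real.sqrt_sq hN'.le]
        congr 1
        field_simp
        ring_nf; rw [Real.sq_sqrt (by positivity)]
      have hsqle : Real.sqrt (N' * M) ≤ 1 + δ := by
        have h1 : N' * M ≤ (1 + δ) ^ 2 := by nlinarith
        exact (Real.sqrt_le_left (by positivity)).mpr h1
      refine ⟨s • (g.comp (jmap X)), ?_, ?_, ?_⟩
      · intro y
        have h1 := hgu (jmap X y)
        rw [hjnorm] at h1
        have e : ‖(s • g.comp (jmap X)) y‖ = s * ‖g (jmap X y)‖ := by
          simp [norm_smul, abs_of_pos hspos]
        rw [e]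
        calc s * ‖g (jmap X y)‖ ≤ s * (M * ‖y‖) := by
              exact mul_le_mul_of_nonneg_left h1 hspos.le
          _ = (s * M) * ‖y‖ := by ring
          _ = Real.sqrt (N' * M) * ‖y‖ := by rw [hsM]
          _ ≤ (1 + δ) * ‖y‖ := mul_le_mul_of_nonneg_right hsqle (norm_nonneg _)
      · intro y
        have h1 := hgl (jmap X y)
        rw [hjnorm] at h1
        have e : ‖(s • g.comp (jmap X)) y‖ = s * ‖g (jmap X y)‖ := by
          simp [norm_smul, abs_of_pos hspos]
        rw [e]
        calc ‖y‖ ≤ N' * ‖g (jmap X y)‖ := h1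
          _ = Real.sqrt (N' * M) * (s * ‖g (jmap X y)‖) := by
              linear_combination ‖g ((jmap X) y)‖ * hNs
          _ ≤ (1 + δ) * (s * ‖g (jmap X y)‖) := by
              apply mul_le_mul_of_nonneg_right hsqle
              positivity
      · intro x
        rw [hzeroX x]
        simp
        exact Or.inr (by rw [show (Zt.mk 0 0 : Zt Y X) = 0 from rfl]; exact map_zero g)
  · -- X nontrivial
    obtain ⟨x₀v, hx₀mem, hx₀ne⟩ := Submodule.ne_bot_iff X |>.mp hbot
    set x₀ : X := ⟨x₀v, hx₀mem⟩ with hx₀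
    have hx₀n : 0 < ‖x₀‖ := by
      rw [norm_pos_iff]
      exact fun hc => hx₀ne (by simpa [hx₀] using congrArg Subtype.val hc)
    have hfx₀ : 0 < ‖f x₀‖ := by
      have := hfl x₀
      nlinarith
    have hknorm : ‖(kmap X x₀ : Zt Y X)‖ = ‖f x₀‖ := by
      rw [nrm, zN_kmap f hε0.le hfu]
    have hgk : g (kmap X x₀) = f x₀ := by
      have := hgext ⟨kmap X x₀, ⟨x₀, rfl⟩⟩
      simpa [hf₁] using this
    have hM1 : 1 ≤ M := by
      have h1 := hgu (kmap X x₀)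
      rw [hknorm, hgk] at h1
      nlinarith
    have hN1 : 1 ≤ N' := by
      have h1 := hgl (kmap X x₀)
      rw [hknorm, hgk] at h1
      nlinarith
    have hMle : M ≤ 1 + δ := by nlinarith
    have hNle : N' ≤ 1 + δ := by nlinarith
    refine ⟨g.comp (jmap X), ?_, ?_, ?_⟩
    · intro y
      have h1 := hgu (jmap X y)
      rw [hjnorm] at h1
      calc ‖(g.comp (jmap X)) y‖ = ‖g (jmap X y)‖ := rfl
        _ ≤ M * ‖y‖ := h1
        _ ≤ (1 + δ) * ‖y‖ := mul_le_mul_of_nonneg_right hMle (norm_nonneg _)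
    · intro y
      have h1 := hgl (jmap X y)
      rw [hjnorm] at h1
      calc ‖y‖ ≤ N' * ‖g (jmap X y)‖ := h1
        _ ≤ (1 + δ) * ‖g (jmap X y)‖ := mul_le_mul_of_nonneg_right hNle (norm_nonneg _)
    · intro x
      have hgkx : g (kmap X x) = f x := by
        have := hgext ⟨kmap X x, ⟨x, rfl⟩⟩
        simpa [hf₁] using this
      have e : (g.comp (jmap X)) ↑x - f x = g (jmap X ↑x - kmap X x) := by
        rw [map_sub, hgkx]
        rfl
      rw [e]
      calc ‖g (jmap X ↑x - kmap X x)‖ ≤ M * ‖jmap X ↑x - kmap X x‖ := hgu _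
        _ ≤ M * (ε * ‖x‖) := by
            apply mul_le_mul_of_nonneg_left _ (by linarith : (0:ℝ) ≤ M)
            rw [nrm]
            exact zN_diag f hε0.le x
        _ ≤ (1 + δ) * ε * ‖x‖ := by
            have := mul_le_mul_of_nonneg_right hMle (mul_nonneg hε0.le (norm_nonneg x))
            linarith


section Main

variable {G : Type} [NormedAddCommGroup G] [NormedSpace ℝ G]
variable {X : Type} [NormedAddCommGroup X] [NormedSpace ℝ X]

/-- The finite-dimensional approximating subspaces. -/
def XnS (D : ℕ → X) (n : ℕ) : Submodule ℝ X := Submodule.span ℝ (D '' Set.Iio n)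

lemma XnS_mono (D : ℕ → X) : Monotone (XnS D) := fun _ _ h =>
  Submodule.span_mono (Set.image_mono (Set.Iio_subset_Iio h))

instance (D : ℕ → X) (n : ℕ) : FiniteDimensional ℝ (XnS D n) :=
  FiniteDimensional.span_of_finite ℝ ((Set.finite_Iio n).image D)

/-- The error sequence. -/
noncomputable def εs (n : ℕ) : ℝ := (1/2 : ℝ) ^ (n + 1)

lemma εs_pos (n : ℕ) : 0 < εs n := by
  have : (0:ℝ) < (1/2 : ℝ) ^ (n+1) := by positivity
  simpa [εs] using this
lemma εs_le_half (n : ℕ) : εs n ≤ 1/2 := by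
  have h : (1/2 : ℝ) ^ (n+1) ≤ (1/2 : ℝ) ^ 1 := by
    apply pow_le_pow_of_le_one (by norm_num) (by norm_num)
    omega
  simpa [εs] using h
lemma εs_lt_one (n : ℕ) : εs n < 1 := lt_of_le_of_lt (εs_le_half n) (by norm_num)

lemma mem_XnS_succ (D : ℕ → X) (i : ℕ) : D i ∈ XnS D (i + 1) :=
  Submodule.subset_span ⟨i, by simp, rfl⟩

lemma exists_XnS {D : ℕ → X} {x : X} (hx : x ∈ Submodule.span ℝ (Set.range D)) :
    ∃ n, x ∈ XnS D n := by
  let W : Submodule ℝ X :=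
    { carrier := {x | ∃ n, x ∈ XnS D n}
      add_mem' := by
        rintro a b ⟨m, hm⟩ ⟨k, hk⟩
        exact ⟨max m k, Submodule.add_mem _ (XnS_mono D (le_max_left m k) hm)
          (XnS_mono D (le_max_right m k) hk)⟩
      zero_mem' := ⟨0, Submodule.zero_mem _⟩
      smul_mem' := by
        rintro c a ⟨m, hm⟩
        exact ⟨m, Submodule.smul_mem _ c hm⟩ }
  have hle : Submodule.span ℝ (Set.range D) ≤ W := by
    rw [Submodule.span_le]
    rintro _ ⟨i, rfl⟩
    exact ⟨i + 1, mem_XnS_succ D i⟩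
  exact hle hx

end Main

section Seq

variable {G : Type} [NormedAddCommGroup G] [NormedSpace ℝ G]
variable {X : Type} [NormedAddCommGroup X] [NormedSpace ℝ X]

lemma XnS_zero (D : ℕ → X) (x : XnS D 0) : x = 0 := by
  have h0 : (Set.Iio 0 : Set ℕ) = ∅ := by ext i; simp
  have hx : (x : X) ∈ Submodule.span ℝ (D '' (Set.Iio 0)) := x.2
  rw [h0, Set.image_empty, Submodule.span_empty, Submodule.mem_bot] at hx
  exact Subtype.ext hx

/-- One step of the construction. -/
lemma stepEx (hG : IsGurarii G) (D : ℕ → X) (n : ℕ)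
    (p : {fn : XnS D n →ₗ[ℝ] G //
      (∀ x, ‖fn x‖ ≤ (1 + εs n) * ‖x‖) ∧ (∀ x, ‖x‖ ≤ (1 + εs n) * ‖fn x‖)}) :
    ∃ fn' : XnS D (n+1) →ₗ[ℝ] G,
      ((∀ x, ‖fn' x‖ ≤ (1 + εs (n+1)) * ‖x‖) ∧ (∀ x, ‖x‖ ≤ (1 + εs (n+1)) * ‖fn' x‖)) ∧
      (∀ x : XnS D n, ‖fn' (Submodule.inclusion (XnS_mono D (Nat.le_succ n)) x) - p.1 x‖
          ≤ (1 + εs (n+1)) * εs n * ‖x‖) := by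
  classical
  set hle := XnS_mono D (Nat.le_succ n)
  set Xc : Submodule ℝ (XnS D (n+1)) := Submodule.comap (XnS D (n+1)).subtype (XnS D n) with hXc
  set e := Submodule.comapSubtypeEquivOfLe hle with he
  set f' : Xc →ₗ[ℝ] G := p.1.comp e.toLinearMap with hf'
  have hne : ∀ z : Xc, ‖e z‖ = ‖z‖ := fun z => rfl
  have hfu : ∀ z : Xc, ‖f' z‖ ≤ (1 + εs n) * ‖z‖ := by
    intro z
    have h1 := p.2.1 (e z)
    rw [hne z] at h1
    exact h1
  have hfl : ∀ z : Xc, (1 - εs n) * ‖z‖ ≤ ‖f' z‖ := by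
    intro z
    have h1 := p.2.2 (e z)
    rw [hne z] at h1
    have hε0 := εs_pos n
    have hε1 := εs_lt_one n
    have hfz : ‖f' z‖ = ‖p.1 (e z)‖ := rfl
    rw [hfz]
    nlinarith [norm_nonneg (p.1 (e z)), norm_nonneg z, sq_nonneg (εs n),
      mul_le_mul_of_nonneg_left h1 (by linarith : (0:ℝ) ≤ 1 - εs n)]
  obtain ⟨h, hu, hl, hclose⟩ := lemmaE hG (XnS D (n+1)) Xc f'
    (εs_pos n) (εs_lt_one n) (εs_pos (n+1)) hfu hfl
  refine ⟨h, ⟨hu, hl⟩, ?_⟩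
  intro x
  have hmem : (Submodule.inclusion hle x : XnS D (n+1)) ∈ Xc := x.2
  set z : Xc := ⟨Submodule.inclusion hle x, hmem⟩ with hz
  have h1 := hclose z
  have he2 : e z = x := Subtype.ext rfl
  have h2 : f' z = p.1 x := by rw [hf']; simp only [LinearMap.comp_apply,
    LinearEquiv.coe_toLinearMap]; rw [he2]
  have h3 : (z : XnS D (n+1)) = Submodule.inclusion hle x := rfl
  have h4 : ‖z‖ = ‖x‖ := rfl
  rw [h2, h3, h4] at h1
  exact h1

/-- The recursively constructed almost-isometries. -/
noncomputable def seqF (hG : IsGurarii G) (D : ℕ → X) : (n : ℕ) →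
    {fn : XnS D n →ₗ[ℝ] G //
      (∀ x, ‖fn x‖ ≤ (1 + εs n) * ‖x‖) ∧ (∀ x, ‖x‖ ≤ (1 + εs n) * ‖fn x‖)}
  | 0 => ⟨0, by
      intro x
      simp only [LinearMap.zero_apply, norm_zero]
      exact mul_nonneg (by linarith [εs_pos 0]) (norm_nonneg x), by
      intro x
      rw [XnS_zero D x]
      simp⟩
  | (n+1) => ⟨(stepEx hG D n (seqF hG D n)).choose,
      (stepEx hG D n (seqF hG D n)).choose_spec.1⟩

lemma seqF_succ (hG : IsGurarii G) (D : ℕ → X) (n : ℕ) (x : XnS D n) :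
    ‖(seqF hG D (n+1)).1 (Submodule.inclusion (XnS_mono D (Nat.le_succ n)) x)
        - (seqF hG D n).1 x‖ ≤ (1 + εs (n+1)) * εs n * ‖x‖ := by
  have heq : (seqF hG D (n+1)).1 = (stepEx hG D n (seqF hG D n)).choose := by
    simp only [seqF]
  rw [heq]
  exact (stepEx hG D n (seqF hG D n)).choose_spec.2 x

end Seq

/-- Every separable real Banach space embeds isometrically into any Gurariĭ space. -/
theorem gurarii_isometrically_universal
    {G : Type} [NormedAddCommGroup G] [NormedSpace ℝ G] (hG : IsGurarii G)
    {X : Type} [NormedAddCommGroup X] [NormedSpace ℝ X] [CompleteSpace X]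
    [TopologicalSpace.SeparableSpace X] :
    ∃ f : X →ₗ[ℝ] G, ∀ x : X, ‖f x‖ = ‖x‖ := by
  classical
  haveI : CompleteSpace G := hG.1
  haveI : Nonempty X := ⟨0⟩
  obtain ⟨D, hD⟩ := TopologicalSpace.exists_dense_seq X
  set V : Submodule ℝ X := Submodule.span ℝ (Set.range D) with hV
  have hVd : Dense (V : Set X) := hD.mono Submodule.subset_span
  -- the approximating sequence of functions
  set ψ : ℕ → X → G := fun n x =>
    if h : x ∈ XnS D n then (seqF hG D n).1 ⟨x, h⟩ else 0 with hψ
  have hψ_eq : ∀ n (x : X) (h : x ∈ XnS D n), ψ n x = (seqF hG D n).1 ⟨x, h⟩ := by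
    intro n x h
    simp [hψ, dif_pos h]
  have hψ_succ : ∀ n (x : X), x ∈ XnS D n → ‖ψ (n+1) x - ψ n x‖ ≤ (1/2)^n * ‖x‖ := by
    intro n x h
    have h' : x ∈ XnS D (n+1) := XnS_mono D (Nat.le_succ n) h
    rw [hψ_eq n x h, hψ_eq (n+1) x h']
    have hincl : (⟨x, h'⟩ : XnS D (n+1)) = Submodule.inclusion (XnS_mono D (Nat.le_succ n)) ⟨x, h⟩ :=
      Subtype.ext rfl
    rw [hincl]
    have key := seqF_succ hG D n ⟨x, h⟩
    have hb : (1 + εs (n+1)) * εs n ≤ (1/2)^n := by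
      have h1 : εs (n+1) ≤ 1/2 := εs_le_half (n+1)
      have h2 : εs n = (1/2 : ℝ)^(n+1) := rfl
      have h3 : (0:ℝ) < (1/2 : ℝ)^(n+1) := by positivity
      have h4 : (1 + εs (n+1)) ≤ 2 := by linarith
      have h5 : (1/2 : ℝ)^(n+1) * 2 = (1/2)^n := by
        rw [pow_succ]; ring
      nlinarith
    have hn : ‖(⟨x, h⟩ : XnS D n)‖ = ‖x‖ := rfl
    calc ‖(seqF hG D (n+1)).1 _ - (seqF hG D n).1 ⟨x, h⟩‖
        ≤ (1 + εs (n+1)) * εs n * ‖(⟨x, h⟩ : XnS D n)‖ := key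
      _ ≤ (1/2)^n * ‖x‖ := by
          rw [hn]
          exact mul_le_mul_of_nonneg_right hb (norm_nonneg x)
  have hψ_ub : ∀ n (x : X), x ∈ XnS D n → ‖ψ n x‖ ≤ (1 + εs n) * ‖x‖ := by
    intro n x h
    rw [hψ_eq n x h]
    exact (seqF hG D n).2.1 ⟨x, h⟩
  have hψ_lb : ∀ n (x : X), x ∈ XnS D n → ‖x‖ ≤ (1 + εs n) * ‖ψ n x‖ := by
    intro n x h
    rw [hψ_eq n x h]
    exact (seqF hG D n).2.2 ⟨x, h⟩
  -- convergence
  have hconv : ∀ x : X, x ∈ V → ∃ l, Tendsto (fun m => ψ m x) atTop (𝓝 l) := by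
    intro x hx
    obtain ⟨n₀, hn₀⟩ := exists_XnS hx
    have hc : CauchySeq (fun m => ψ (m + n₀) x) := by
      apply cauchySeq_of_le_geometric (1/2 : ℝ) ((1/2)^n₀ * ‖x‖) (by norm_num)
      intro m
      have hmem : x ∈ XnS D (m + n₀) := XnS_mono D (Nat.le_add_left n₀ m) hn₀
      have := hψ_succ (m + n₀) x hmem
      rw [dist_eq_norm, norm_sub_rev, show m + 1 + n₀ = m + n₀ + 1 from by omega]
      calc ‖ψ (m + n₀ + 1) x - ψ (m + n₀) x‖ ≤ (1/2)^(m + n₀) * ‖x‖ := this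
        _ = (1/2)^n₀ * ‖x‖ * (1/2)^m := by rw [pow_add]; ring
    obtain ⟨l, hl⟩ := cauchySeq_tendsto_of_complete hc
    exact ⟨l, (tendsto_add_atTop_iff_nat n₀).mp hl⟩
  set F : X → G := fun x => limUnder atTop (fun m => ψ m x) with hF
  have hFt : ∀ x : X, x ∈ V → Tendsto (fun m => ψ m x) atTop (𝓝 (F x)) := by
    intro x hx
    obtain ⟨l, hl⟩ := hconv x hx
    have : F x = l := hl.limUnder_eq
    rwa [this]
  -- eventual additivity etc
  have hψ_add : ∀ (x y : X) m, x ∈ XnS D m → y ∈ XnS D m → ψ m (x + y) = ψ m x + ψ m y := by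
    intro x y m hx hy
    have hxy : x + y ∈ XnS D m := Submodule.add_mem _ hx hy
    rw [hψ_eq m x hx, hψ_eq m y hy, hψ_eq m (x+y) hxy]
    have : (⟨x + y, hxy⟩ : XnS D m) = ⟨x, hx⟩ + ⟨y, hy⟩ := rfl
    rw [this, map_add]
  have hψ_smul : ∀ (c : ℝ) (x : X) m, x ∈ XnS D m → ψ m (c • x) = c • ψ m x := by
    intro c x m hx
    have hcx : c • x ∈ XnS D m := Submodule.smul_mem _ c hx
    rw [hψ_eq m x hx, hψ_eq m (c • x) hcx]
    have : (⟨c • x, hcx⟩ : XnS D m) = c • ⟨x, hx⟩ := rfl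
    rw [this, map_smul]
  -- F is linear on V
  set Flin : V →ₗ[ℝ] G :=
    { toFun := fun v => F v
      map_add' := by
        intro a b
        have ha := hFt a a.2
        have hb := hFt b b.2
        have hab := hFt (↑a + ↑b) (Submodule.add_mem _ a.2 b.2)
        obtain ⟨na, hna⟩ := exists_XnS a.2
        obtain ⟨nb, hnb⟩ := exists_XnS b.2
        have hev : (fun m => ψ m (↑a + ↑b)) =ᶠ[atTop] (fun m => ψ m ↑a + ψ m ↑b) := by
          filter_upwards [eventually_ge_atTop (max na nb)] with m hm
          exact hψ_add ↑a ↑b m (XnS_mono D (le_trans (le_max_left na nb) hm) hna)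
            (XnS_mono D (le_trans (le_max_right na nb) hm) hnb)
        have h2 : Tendsto (fun m => ψ m (↑a + ↑b)) atTop (𝓝 (F ↑a + F ↑b)) :=
          ((ha.add hb).congr' hev.symm)
        exact tendsto_nhds_unique hab h2
      map_smul' := by
        intro c a
        have ha := hFt a a.2
        have hca := hFt (c • ↑a) (Submodule.smul_mem _ c a.2)
        obtain ⟨na, hna⟩ := exists_XnS a.2
        have hev : (fun m => ψ m (c • ↑a)) =ᶠ[atTop] (fun m => c • ψ m ↑a) := by
          filter_upwards [eventually_ge_atTop na] with m hm
          exact hψ_smul c ↑a m (XnS_mono D hm hna)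
        have h2 : Tendsto (fun m => ψ m (c • ↑a)) atTop (𝓝 (c • F ↑a)) :=
          ((ha.const_smul c).congr' hev.symm)
        exact tendsto_nhds_unique hca h2 } with hFlin
  -- F is isometric on V
  have hFiso : ∀ v : V, ‖Flin v‖ = ‖(v : X)‖ := by
    intro v
    have hv := hFt v v.2
    have hn : Tendsto (fun m => ‖ψ m ↑v‖) atTop (𝓝 ‖F ↑v‖) := hv.norm
    obtain ⟨n₀, hn₀⟩ := exists_XnS v.2
    have hsq : Tendsto (fun m => ‖ψ m ↑v‖ - ‖(v : X)‖) atTop (𝓝 0) := by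
      apply squeeze_zero_norm'
        (a := fun m => 2 * εs m * ‖(v : X)‖)
      · filter_upwards [eventually_ge_atTop n₀] with m hm
        have hmem : ↑v ∈ XnS D m := XnS_mono D hm hn₀
        have h1 := hψ_ub m ↑v hmem
        have h2 := hψ_lb m ↑v hmem
        have hε0 := εs_pos m
        have hεh := εs_le_half m
        rw [Real.norm_eq_abs, abs_le]
        constructor
        · nlinarith [norm_nonneg (ψ m (v : X)), norm_nonneg (v : X)]
        · nlinarith [norm_nonneg (ψ m (v : X)), norm_nonneg (v : X)]
      · have h1 : Tendsto (fun m : ℕ => (1/2:ℝ)^m) atTop (𝓝 0) :=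
          tendsto_pow_atTop_nhds_zero_of_lt_one (by norm_num) (by norm_num)
        have h2 : Tendsto (fun m : ℕ => 2 * εs m * ‖(v : X)‖) atTop (𝓝 (2 * (0 * (1/2)) * ‖(v : X)‖)) := by
          have : (fun m : ℕ => 2 * εs m * ‖(v : X)‖)
              = fun m : ℕ => 2 * ((1/2:ℝ)^m * (1/2)) * ‖(v : X)‖ := by
            funext m
            simp only [εs, pow_succ]
          rw [this]
          exact (((h1.mul_const (1/2)).const_mul 2).mul_const _)
        simpa using h2
    have hn2 : Tendsto (fun m => ‖ψ m ↑v‖) atTop (𝓝 ‖(v : X)‖) := by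
      have h3 := hsq.add (tendsto_const_nhds (x := ‖(v : X)‖) (f := atTop (α := ℕ)))
      rw [zero_add] at h3
      have he : (fun m => ‖ψ m ↑v‖) = fun m => (‖ψ m ↑v‖ - ‖(v : X)‖) + ‖(v : X)‖ := by
        funext m; ring
      rw [he]
      exact h3
    exact tendsto_nhds_unique hn hn2
  -- continuity and extension
  set FL : V →L[ℝ] G := Flin.mkContinuous 1 (fun v => by
    rw [hFiso v, one_mul]
    exact le_of_eq rfl) with hFL
  have hui : IsUniformInducing (⇑(V.subtypeL)) := by
    have : Isometry (Subtype.val : V → X) := isometry_subtype_coe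
    exact this.isUniformInducing
  have hdr : DenseRange (⇑(V.subtypeL)) := by
    have hcoe : ⇑(V.subtypeL) = (Subtype.val : V → X) := rfl
    rw [DenseRange, hcoe, Subtype.range_coe]
    exact hVd
  set ext : X →L[ℝ] G := ContinuousLinearMap.extend FL V.subtypeL with hext
  have hext_eq : ∀ v : V, ext ((v : X)) = FL v := fun v =>
    ContinuousLinearMap.extend_eq (f := FL) (e := V.subtypeL) hdr hui v
  have hEq : (fun x : X => ‖ext x‖) = fun x : X => ‖x‖ := by
    apply Continuous.ext_on hVd
    · exact ext.continuous.norm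
    · exact continuous_norm
    · intro x hx
      have h1 : ext x = FL ⟨x, hx⟩ := hext_eq ⟨x, hx⟩
      show ‖ext x‖ = ‖x‖
      rw [h1]
      have h2 : FL ⟨x, hx⟩ = Flin ⟨x, hx⟩ := rfl
      rw [h2, hFiso ⟨x, hx⟩]
  exact ⟨ext.toLinearMap, fun x => congrFun hEq x⟩
end
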